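/- arXiv:1509.03547 — 7 statements merged into one kernel-verified Lean document; each statement's English description precedes it below -/
import Mathlib

section
/- Let k ≥ 4 be a natural number. The 4-element subsets of ZMod k are partitioned by the translation action as follows: the classes [x,y,z], where (x,y,z) ranges over all triples of integers with 1 ≤ x ≤ ⌊k/4⌋, x ≤ y, x ≤ z, 2x+y+z < k, and additionally y ≤ ⌊(k−2x)/2⌋ whenever x = z, together with (in case 4 ∣ k) the additional class [k/4,k/4,k/4], are pairwise disjoint and their union is the set of all 4-element subsets of ZMod k; moreover there are no further classes distinct from these. -/
set_option maxHeartbeats 1000000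
set_option linter.unusedSectionVars false
set_option linter.unusedVariables false

/-- The equivalence class `[x,y,z]`: the translation orbit of the subset
`{0, x, x+y, x+y+z}` of `ZMod k`, i.e. all subsets `{i, i+x, i+x+y, i+x+y+z}`. -/
def transClass (k : ℕ) (x y z : ℕ) : Set (Finset (ZMod k)) :=
  { T | ∃ i : ZMod k,
      T = {i, i + (x : ZMod k), i + (x : ZMod k) + (y : ZMod k),
           i + (x : ZMod k) + (y : ZMod k) + (z : ZMod k)} }

/-- The orbit of a subset `T ⊆ ZMod k` under the translation action. -/
def transOrbit (k : ℕ) (T : Finset (ZMod k)) : Set (Finset (ZMod k)) :=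
  { S | ∃ d : ZMod k, S = T.image (· + d) }

/-- The index set of class representatives: triples `(x,y,z)` with
`1 ≤ x ≤ ⌊k/4⌋`, `x ≤ y`, `x ≤ z`, `2x+y+z < k`, and `y ≤ ⌊(k-2x)/2⌋` whenever `x = z`;
together with, in case `4 ∣ k`, the additional triple `(k/4, k/4, k/4)`. -/
def classIndex (k : ℕ) : Set (ℕ × ℕ × ℕ) :=
  { p | 1 ≤ p.1 ∧ p.1 ≤ k / 4 ∧ p.1 ≤ p.2.1 ∧ p.1 ≤ p.2.2 ∧
        2 * p.1 + p.2.1 + p.2.2 < k ∧ (p.1 = p.2.2 → p.2.1 ≤ (k - 2 * p.1) / 2) }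
    ∪ (if 4 ∣ k then {(k / 4, k / 4, k / 4)} else ∅)

/-! ### Arithmetic auxiliary lemmas -/

/-- A division-free form of the canonical-representative condition. -/
def CanonB (k x y z : ℕ) : Prop :=
  (1 ≤ x ∧ 4 * x ≤ k ∧ x ≤ y ∧ x ≤ z ∧ 2 * x + y + z < k ∧ (x = z → 2 * y + 2 * x ≤ k))
  ∨ (k = 4 * x ∧ y = x ∧ z = x)

private def Pmin (x y z w : ℕ) : Prop := x ≤ y ∧ x ≤ z ∧ x < w ∧ (x = z → y ≤ w)

private lemma step1 (x y z w : ℕ) :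
    Pmin x y z w ∨ Pmin y z w x ∨ Pmin z w x y ∨ Pmin w x y z ∨ (x = y ∧ y = z ∧ z = w) := by
  unfold Pmin; omega

lemma canon_exists (k x y z w : ℕ) (hk : 4 ≤ k) (hx : 1 ≤ x) (hy : 1 ≤ y)
    (hz : 1 ≤ z) (hw : 1 ≤ w) (hs : x + y + z + w = k) :
    CanonB k x y z ∨ CanonB k y z w ∨ CanonB k z w x ∨ CanonB k w x y := by
  rcases step1 x y z w with h | h | h | h | h
  · exact Or.inl (by unfold Pmin at h; unfold CanonB; omega)
  · exact Or.inr <| Or.inl (by unfold Pmin at h; unfold CanonB; omega)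
  · exact Or.inr <| Or.inr <| Or.inl (by unfold Pmin at h; unfold CanonB; omega)
  · exact Or.inr <| Or.inr <| Or.inr (by unfold Pmin at h; unfold CanonB; omega)
  · exact Or.inl (Or.inr (by omega))

lemma canon_uniq (k x y z x' y' z' : ℕ) (hk : 4 ≤ k)
    (h1 : CanonB k x y z) (h2 : CanonB k x' y' z')
    (hr : (x' = x ∧ y' = y ∧ z' = z) ∨
          (x' = y ∧ y' = z ∧ z' = k - (x + y + z)) ∨
          (x' = z ∧ y' = k - (x + y + z) ∧ z' = x) ∨
          (x' = k - (x + y + z) ∧ y' = x ∧ z' = y)) :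
    x = x' ∧ y = y' ∧ z = z' := by
  unfold CanonB at h1 h2; omega

lemma canon_bounds (k x y z : ℕ) (hk : 4 ≤ k) (h : CanonB k x y z) :
    1 ≤ x ∧ 1 ≤ y ∧ 1 ≤ z ∧ x + y + z < k := by
  unfold CanonB at h; omega

lemma mem_classIndex (k : ℕ) (hk : 4 ≤ k) (p : ℕ × ℕ × ℕ) :
    p ∈ classIndex k ↔ CanonB k p.1 p.2.1 p.2.2 := by
  obtain ⟨x, y, z⟩ := p
  unfold classIndex CanonB
  by_cases h4 : 4 ∣ k <;>
    simp [h4, Set.mem_union, Set.mem_setOf_eq, Prod.ext_iff] <;> omega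

/-! ### ZMod auxiliary lemmas -/

section ZModAux
variable {k : ℕ} [NeZero k]

lemma natCast_inj_lt (a b : ℕ) (ha : a < k) (hb : b < k) (h : (a : ZMod k) = b) : a = b := by
  have := congrArg ZMod.val h
  rwa [ZMod.val_cast_of_lt ha, ZMod.val_cast_of_lt hb] at this

lemma mem3 (i : ZMod k) (a b₁ b₂ b₃ : ℕ) (h0 : 0 < a) (ha : a < k)
    (hb₁ : b₁ < k) (hb₂ : b₂ < k) (hb₃ : b₃ < k)
    (hmem : i + (a : ZMod k) ∈
      ({i, i + (b₁ : ZMod k), i + (b₂ : ZMod k), i + (b₃ : ZMod k)} : Finset (ZMod k))) :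
    a = b₁ ∨ a = b₂ ∨ a = b₃ := by
  have hkpos : 0 < k := Nat.pos_of_ne_zero (NeZero.ne k)
  simp only [Finset.mem_insert, Finset.mem_singleton] at hmem
  rcases hmem with h | h | h | h
  · exfalso
    have h' : i + (a : ZMod k) = i + ((0 : ℕ) : ZMod k) := by simpa using h
    have := natCast_inj_lt a 0 ha hkpos (add_left_cancel h')
    omega
  · exact Or.inl (natCast_inj_lt a b₁ ha hb₁ (add_left_cancel h))
  · exact Or.inr (Or.inl (natCast_inj_lt a b₂ ha hb₂ (add_left_cancel h)))
  · exact Or.inr (Or.inr (natCast_inj_lt a b₃ ha hb₃ (add_left_cancel h)))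

lemma quad_eq (i : ZMod k) (a₁ a₂ a₃ b₁ b₂ b₃ : ℕ)
    (ha1 : 0 < a₁) (ha2 : a₁ < a₂) (ha3 : a₂ < a₃) (ha4 : a₃ < k)
    (hb1 : 0 < b₁) (hb2 : b₁ < b₂) (hb3 : b₂ < b₃) (hb4 : b₃ < k)
    (E : ({i, i + (a₁ : ZMod k), i + (a₂ : ZMod k), i + (a₃ : ZMod k)} : Finset (ZMod k))
       = {i, i + (b₁ : ZMod k), i + (b₂ : ZMod k), i + (b₃ : ZMod k)}) :
    a₁ = b₁ ∧ a₂ = b₂ ∧ a₃ = b₃ := by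
  have m1 := mem3 i a₁ b₁ b₂ b₃ ha1 (by omega) (by omega) (by omega) hb4
    (by rw [← E]; simp)
  have m2 := mem3 i a₂ b₁ b₂ b₃ (by omega) (by omega) (by omega) (by omega) hb4
    (by rw [← E]; simp)
  have m3 := mem3 i a₃ b₁ b₂ b₃ (by omega) ha4 (by omega) (by omega) hb4
    (by rw [← E]; simp)
  have n1 := mem3 i b₁ a₁ a₂ a₃ hb1 (by omega) (by omega) (by omega) ha4
    (by rw [E]; simp)
  have n3 := mem3 i b₃ a₁ a₂ a₃ (by omega) hb4 (by omega) (by omega) ha4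
    (by rw [E]; simp)
  omega

lemma rot1 (x y z w : ℕ) (h : x + y + z + w = k) (i : ZMod k) :
    ({i, i + (x : ZMod k), i + (x : ZMod k) + (y : ZMod k),
      i + (x : ZMod k) + (y : ZMod k) + (z : ZMod k)} : Finset (ZMod k))
    = {i + (x : ZMod k), i + (x : ZMod k) + (y : ZMod k),
       i + (x : ZMod k) + (y : ZMod k) + (z : ZMod k),
       i + (x : ZMod k) + (y : ZMod k) + (z : ZMod k) + (w : ZMod k)} := by
  have h0 : (x : ZMod k) + y + z + w = 0 := by
    have hc : ((x + y + z + w : ℕ) : ZMod k) = ((k : ℕ) : ZMod k) := by rw [h]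
    push_cast at hc
    simpa using hc
  have hl : i + (x : ZMod k) + y + z + (w : ZMod k) = i := by linear_combination h0
  rw [hl]
  ext a
  simp only [Finset.mem_insert, Finset.mem_singleton]
  tauto

lemma norm_rep (i : ZMod k) (x y z : ℕ) :
    ({i, i + (x : ZMod k), i + (x : ZMod k) + (y : ZMod k),
      i + (x : ZMod k) + (y : ZMod k) + (z : ZMod k)} : Finset (ZMod k))
    = {i, i + ((x : ℕ) : ZMod k), i + ((x + y : ℕ) : ZMod k), i + ((x + y + z : ℕ) : ZMod k)} := by
  simp [Nat.cast_add, add_assoc]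

lemma card4 (i : ZMod k) (a₁ a₂ a₃ : ℕ) (h1 : 0 < a₁) (h2 : a₁ < a₂) (h3 : a₂ < a₃)
    (h4 : a₃ < k) :
    ({i, i + (a₁ : ZMod k), i + (a₂ : ZMod k), i + (a₃ : ZMod k)} : Finset (ZMod k)).card = 4 := by
  have hkpos : 0 < k := Nat.pos_of_ne_zero (NeZero.ne k)
  have ne' : ∀ a b : ℕ, a < k → b < k → a ≠ b → i + (a : ZMod k) ≠ i + (b : ZMod k) :=
    fun a b ha hb hne h => hne (natCast_inj_lt a b ha hb (add_left_cancel h))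
  have ne0 : ∀ b : ℕ, 0 < b → b < k → i ≠ i + (b : ZMod k) := by
    intro b h0 hb h
    have h' : i + ((0 : ℕ) : ZMod k) = i + (b : ZMod k) := by simpa using h
    have := natCast_inj_lt 0 b hkpos hb (add_left_cancel h')
    omega
  rw [Finset.card_insert_of_notMem, Finset.card_insert_of_notMem,
    Finset.card_insert_of_notMem, Finset.card_singleton]
  · simp only [Finset.mem_singleton]
    exact ne' a₂ a₃ (by omega) h4 (by omega)
  · simp only [Finset.mem_insert, Finset.mem_singleton]
    push_neg
    exact ⟨ne' a₁ a₂ (by omega) (by omega) (by omega), ne' a₁ a₃ (by omega) h4 (by omega)⟩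
  · simp only [Finset.mem_insert, Finset.mem_singleton]
    push_neg
    exact ⟨ne0 a₁ h1 (by omega), ne0 a₂ (by omega) (by omega), ne0 a₃ (by omega) h4⟩

lemma class_rot_sub (x y z w : ℕ) (h : x + y + z + w = k) :
    transClass k x y z ⊆ transClass k y z w := by
  rintro T ⟨i, rfl⟩
  exact ⟨i + (x : ZMod k), rot1 x y z w h i⟩

lemma class_rot_eq (x y z w : ℕ) (h : x + y + z + w = k) :
    transClass k x y z = transClass k y z w := by
  refine subset_antisymm (class_rot_sub x y z w h) ?_
  calc transClass k y z w ⊆ transClass k z w x := class_rot_sub _ _ _ _ (by omega)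
    _ ⊆ transClass k w x y := class_rot_sub _ _ _ _ (by omega)
    _ ⊆ transClass k x y z := class_rot_sub _ _ _ _ (by omega)

lemma orbit_eq_class (x y z : ℕ) (T : Finset (ZMod k)) (hT : T ∈ transClass k x y z) :
    transOrbit k T = transClass k x y z := by
  obtain ⟨i, rfl⟩ := hT
  ext S
  simp only [transOrbit, transClass, Set.mem_setOf_eq]
  constructor
  · rintro ⟨d, rfl⟩
    refine ⟨i + d, ?_⟩
    simp only [Finset.image_insert, Finset.image_singleton]
    rw [show i + (x : ZMod k) + d = i + d + (x : ZMod k) by ring,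
      show i + (x : ZMod k) + (y : ZMod k) + d = i + d + (x : ZMod k) + (y : ZMod k) by ring,
      show i + (x : ZMod k) + (y : ZMod k) + (z : ZMod k) + d
          = i + d + (x : ZMod k) + (y : ZMod k) + (z : ZMod k) by ring]
  · rintro ⟨j, rfl⟩
    refine ⟨j - i, ?_⟩
    simp only [Finset.image_insert, Finset.image_singleton]
    rw [show i + (j - i) = j by ring,
      show i + (x : ZMod k) + (j - i) = j + (x : ZMod k) by ring,
      show i + (x : ZMod k) + (y : ZMod k) + (j - i) = j + (x : ZMod k) + (y : ZMod k) by ring,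
      show i + (x : ZMod k) + (y : ZMod k) + (z : ZMod k) + (j - i)
          = j + (x : ZMod k) + (y : ZMod k) + (z : ZMod k) by ring]

lemma rep_all (x y z : ℕ) (hx : 1 ≤ x) (hy : 1 ≤ y) (hz : 1 ≤ z) (hs : x + y + z < k)
    (i u : ZMod k)
    (hu : u ∈ ({i, i + (x : ZMod k), i + (x : ZMod k) + (y : ZMod k),
      i + (x : ZMod k) + (y : ZMod k) + (z : ZMod k)} : Finset (ZMod k))) :
    ∃ a b c : ℕ, 1 ≤ a ∧ 1 ≤ b ∧ 1 ≤ c ∧ a + b + c < k ∧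
      ((a = x ∧ b = y ∧ c = z) ∨ (a = y ∧ b = z ∧ c = k - (x + y + z)) ∨
       (a = z ∧ b = k - (x + y + z) ∧ c = x) ∨ (a = k - (x + y + z) ∧ b = x ∧ c = y)) ∧
      ({i, i + (x : ZMod k), i + (x : ZMod k) + (y : ZMod k),
        i + (x : ZMod k) + (y : ZMod k) + (z : ZMod k)} : Finset (ZMod k))
      = {u, u + (a : ZMod k), u + (a : ZMod k) + (b : ZMod k),
         u + (a : ZMod k) + (b : ZMod k) + (c : ZMod k)} := by
  set w : ℕ := k - (x + y + z) with hw
  have hw1 : 1 ≤ w := by omega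
  have hsum : x + y + z + w = k := by omega
  have E1 := rot1 x y z w hsum i
  have E2 := rot1 y z w x (by omega) (i + (x : ZMod k))
  have E3 := rot1 z w x y (by omega) (i + (x : ZMod k) + (y : ZMod k))
  simp only [Finset.mem_insert, Finset.mem_singleton] at hu
  rcases hu with rfl | rfl | rfl | rfl
  · exact ⟨x, y, z, hx, hy, hz, by omega, Or.inl ⟨rfl, rfl, rfl⟩, rfl⟩
  · exact ⟨y, z, w, hy, hz, hw1, by omega, Or.inr (Or.inl ⟨rfl, rfl, rfl⟩), E1⟩
  · exact ⟨z, w, x, hz, hw1, hx, by omega, Or.inr (Or.inr (Or.inl ⟨rfl, rfl, rfl⟩)),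
      E1.trans E2⟩
  · exact ⟨w, x, y, hw1, hx, hy, by omega, Or.inr (Or.inr (Or.inr ⟨rfl, rfl, rfl⟩)),
      (E1.trans E2).trans E3⟩

end ZModAux

/-! ### Main theorem -/

/-- The classes `[x,y,z]` indexed by `classIndex k` are pairwise disjoint, their union is
the set of all 4-element subsets of `ZMod k`, and every translation orbit of a 4-element
subset of `ZMod k` is one of these classes (there are no further classes). -/
theorem transClass_partition (k : ℕ) (hk : 4 ≤ k) :
    (∀ p ∈ classIndex k, ∀ q ∈ classIndex k, p ≠ q →
      Disjoint (transClass k p.1 p.2.1 p.2.2) (transClass k q.1 q.2.1 q.2.2)) ∧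
    (⋃ p ∈ classIndex k, transClass k p.1 p.2.1 p.2.2)
      = { T : Finset (ZMod k) | T.card = 4 } ∧
    (∀ T : Finset (ZMod k), T.card = 4 →
      ∃ p ∈ classIndex k, transOrbit k T = transClass k p.1 p.2.1 p.2.2) := by
  haveI : NeZero k := ⟨by omega⟩
  -- uniqueness: a set lies in at most one indexed class
  have C1 : ∀ p ∈ classIndex k, ∀ q ∈ classIndex k, ∀ T : Finset (ZMod k),
      T ∈ transClass k p.1 p.2.1 p.2.2 → T ∈ transClass k q.1 q.2.1 q.2.2 → p = q := by
    rintro ⟨x, y, z⟩ hp ⟨x', y', z'⟩ hq T hTp hTq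
    have hpB := (mem_classIndex k hk _).mp hp
    have hqB := (mem_classIndex k hk _).mp hq
    obtain ⟨hx, hy, hz, hsp⟩ := canon_bounds k x y z hk hpB
    obtain ⟨hx', hy', hz', hsq⟩ := canon_bounds k x' y' z' hk hqB
    obtain ⟨j, rfl⟩ := hTq
    obtain ⟨i, hTi⟩ := hTp
    have hj : j ∈ ({i, i + (x : ZMod k), i + (x : ZMod k) + (y : ZMod k),
        i + (x : ZMod k) + (y : ZMod k) + (z : ZMod k)} : Finset (ZMod k)) := by
      rw [← hTi]; simp
    obtain ⟨a, b, c, ha1, hb1, hc1, habc, hrot, hE⟩ := rep_all x y z hx hy hz hsp i j hj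
    have E : ({j, j + (a : ZMod k), j + (a : ZMod k) + (b : ZMod k),
        j + (a : ZMod k) + (b : ZMod k) + (c : ZMod k)} : Finset (ZMod k))
        = {j, j + (x' : ZMod k), j + (x' : ZMod k) + (y' : ZMod k),
           j + (x' : ZMod k) + (y' : ZMod k) + (z' : ZMod k)} := hE.symm.trans hTi.symm
    rw [norm_rep j a b c, norm_rep j x' y' z'] at E
    obtain ⟨e1, e2, e3⟩ := quad_eq j a (a + b) (a + b + c) x' (x' + y') (x' + y' + z')
      (by omega) (by omega) (by omega) habc (by omega) (by omega) (by omega) hsq E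
    obtain ⟨f1, f2, f3⟩ := canon_uniq k x y z x' y' z' hk hpB hqB (by omega)
    rw [f1, f2, f3]
  -- existence: every 4-set lies in some indexed class, which is its orbit
  have C2 : ∀ T : Finset (ZMod k), T.card = 4 →
      ∃ p ∈ classIndex k, T ∈ transClass k p.1 p.2.1 p.2.2 ∧
        transOrbit k T = transClass k p.1 p.2.1 p.2.2 := by
    intro T hT
    have himg : (T.image ZMod.val).card = 4 := by
      rw [Finset.card_image_of_injective _ (ZMod.val_injective k), hT]
    have hlen : ((T.image ZMod.val).sort (· ≤ ·)).length = 4 := by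
      rw [Finset.length_sort, himg]
    obtain ⟨a, b, c, d, hl⟩ : ∃ a b c d, (T.image ZMod.val).sort (· ≤ ·) = [a, b, c, d] := by
      rcases e : (T.image ZMod.val).sort (· ≤ ·) with
        _ | ⟨a, _ | ⟨b, _ | ⟨c, _ | ⟨d, _ | ⟨e5, t⟩⟩⟩⟩⟩ <;>
        rw [e] at hlen <;> simp at hlen
      exact ⟨a, b, c, d, rfl⟩
    have hsort := List.sortedLT_iff_pairwise.mp (Finset.sortedLT_sort (T.image ZMod.val))
    rw [hl] at hsort
    simp only [List.pairwise_cons, List.mem_cons, List.mem_singleton, List.not_mem_nil,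
      List.Pairwise.nil] at hsort
    have hab : a < b := by
      rcases hsort with ⟨h1, _⟩; exact h1 b (Or.inl rfl)
    have hbc : b < c := by
      rcases hsort with ⟨_, h2, _⟩; exact h2 c (Or.inl rfl)
    have hcd : c < d := by
      rcases hsort with ⟨_, _, h3, _⟩; exact h3 d (Or.inl rfl)
    have hset : T.image ZMod.val = {a, b, c, d} := by
      rw [← Finset.sort_toFinset (T.image ZMod.val) (· ≤ ·), hl]
      simp
    have hdk : d < k := by
      have hd : d ∈ T.image ZMod.val := by rw [hset]; simp
      obtain ⟨t, _, rfl⟩ := Finset.mem_image.mp hd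
      exact ZMod.val_lt t
    have hTlit : T = {(a : ZMod k), (b : ZMod k), (c : ZMod k), (d : ZMod k)} := by
      have : T = (T.image ZMod.val).image (Nat.cast : ℕ → ZMod k) := by
        rw [Finset.image_image]
        simp [Function.comp_def, ZMod.natCast_zmod_val]
      rw [this, hset]
      simp
    have e1 : (a : ZMod k) + ((b - a : ℕ) : ZMod k) = (b : ZMod k) := by
      rw [← Nat.cast_add]; congr 1; omega
    have e2 : (b : ZMod k) + ((c - b : ℕ) : ZMod k) = (c : ZMod k) := by
      rw [← Nat.cast_add]; congr 1; omega
    have e3 : (c : ZMod k) + ((d - c : ℕ) : ZMod k) = (d : ZMod k) := by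
      rw [← Nat.cast_add]; congr 1; omega
    have hmem : T ∈ transClass k (b - a) (c - b) (d - c) := by
      refine ⟨(a : ZMod k), ?_⟩
      rw [hTlit, e1, e2, e3]
    have hx : 1 ≤ b - a := by omega
    have hy : 1 ≤ c - b := by omega
    have hz : 1 ≤ d - c := by omega
    have hs : (b - a) + (c - b) + (d - c) < k := by omega
    set w : ℕ := k - ((b - a) + (c - b) + (d - c)) with hwdef
    have hw : 1 ≤ w := by omega
    have hsum : (b - a) + (c - b) + (d - c) + w = k := by omega
    have R1 : transClass k (b - a) (c - b) (d - c) = transClass k (c - b) (d - c) w :=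
      class_rot_eq _ _ _ _ hsum
    have R2 : transClass k (c - b) (d - c) w = transClass k (d - c) w (b - a) :=
      class_rot_eq _ _ _ _ (by omega)
    have R3 : transClass k (d - c) w (b - a) = transClass k w (b - a) (c - b) :=
      class_rot_eq _ _ _ _ (by omega)
    rcases canon_exists k (b - a) (c - b) (d - c) w hk hx hy hz hw hsum with h | h | h | h
    · exact ⟨(b - a, c - b, d - c), (mem_classIndex k hk _).mpr h, hmem,
        orbit_eq_class _ _ _ T hmem⟩
    · have hmem' : T ∈ transClass k (c - b) (d - c) w := R1 ▸ hmem
      exact ⟨(c - b, d - c, w), (mem_classIndex k hk _).mpr h, hmem',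
        orbit_eq_class _ _ _ T hmem'⟩
    · have hmem' : T ∈ transClass k (d - c) w (b - a) := R2 ▸ (R1 ▸ hmem)
      exact ⟨(d - c, w, b - a), (mem_classIndex k hk _).mpr h, hmem',
        orbit_eq_class _ _ _ T hmem'⟩
    · have hmem' : T ∈ transClass k w (b - a) (c - b) := R3 ▸ (R2 ▸ (R1 ▸ hmem))
      exact ⟨(w, b - a, c - b), (mem_classIndex k hk _).mpr h, hmem',
        orbit_eq_class _ _ _ T hmem'⟩
  refine ⟨?_, ?_, ?_⟩
  · intro p hp q hq hne
    rw [Set.disjoint_left]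
    intro T hTp hTq
    exact hne (C1 p hp q hq T hTp hTq)
  · ext T
    simp only [Set.mem_iUnion, Set.mem_setOf_eq]
    constructor
    · rintro ⟨p, hp, hTp⟩
      obtain ⟨x, y, z⟩ := p
      obtain ⟨hx, hy, hz, hs⟩ := canon_bounds k x y z hk ((mem_classIndex k hk _).mp hp)
      obtain ⟨i, rfl⟩ := hTp
      rw [norm_rep]
      exact card4 i x (x + y) (x + y + z) (by omega) (by omega) (by omega) (by omega)
    · intro h4
      obtain ⟨p, hp, hmem, _⟩ := C2 T h4
      exact ⟨p, hp, hmem⟩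
  · intro T hT
    obtain ⟨p, hp, _, horb⟩ := C2 T hT
    exact ⟨p, hp, horb⟩
end

section
/- Let k ≥ 5 be an odd natural number. Then every translation-orbit of 4-element subsets of ZMod k has exactly k elements, and the total number of such orbits equals (k−1)(k−2)(k−3)/24. -/
/-- The set of translation orbits of 4-element subsets of `ZMod k`. -/
def transOrbits4 (k : ℕ) : Set (Set (Finset (ZMod k))) :=
  { O | ∃ T : Finset (ZMod k), T.card = 4 ∧ O = transOrbit k T }

lemma trans_inj (k : ℕ) (d : ZMod k) :
    Function.Injective (fun x : ZMod k => x + d) := fun a b h => by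
  simpa using h

lemma four_unit (k : ℕ) (hodd : Odd k) : IsUnit (4 : ZMod k) := by
  have h2 : Nat.Coprime 2 k := hodd.coprime_two_left
  have h4 : Nat.Coprime 4 k := by
    have : Nat.Coprime (2 ^ 2) (k ^ 1) := Nat.Coprime.pow 2 1 h2
    simpa using this
  have := (ZMod.isUnit_iff_coprime 4 k).2 h4
  simpa using this

lemma map_inj (k : ℕ) (hodd : Odd k) (T : Finset (ZMod k)) (hT : T.card = 4) :
    Function.Injective (fun d : ZMod k => T.image (· + d)) := by
  intro d₁ d₂ h
  simp only at h
  have hs := congrArg (fun S : Finset (ZMod k) => ∑ x ∈ S, x) h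
  simp only [Finset.sum_image (fun a _ b _ hab => trans_inj k _ hab),
    Finset.sum_add_distrib, Finset.sum_const, hT] at hs
  have h4 : (4 : ZMod k) * d₁ = 4 * d₂ := by
    have := add_left_cancel hs
    simpa [nsmul_eq_mul] using this
  exact (four_unit k hodd).mul_left_cancel h4

/-- Orbit as a finset. -/
noncomputable def orbitF (k : ℕ) [NeZero k] (T : Finset (ZMod k)) :
    Finset (Finset (ZMod k)) :=
  Finset.univ.image (fun d : ZMod k => T.image (· + d))

lemma orbitF_coe (k : ℕ) [NeZero k] (T : Finset (ZMod k)) :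
    (orbitF k T : Set (Finset (ZMod k))) = transOrbit k T := by
  ext S
  simp [orbitF, transOrbit, eq_comm]

/-- For odd `k ≥ 5`, every translation orbit of 4-element subsets of `ZMod k` has exactly
`k` elements, and the total number of orbits is `(k-1)(k-2)(k-3)/24`. -/
theorem transOrbits4_odd (k : ℕ) (hk : 5 ≤ k) (hodd : Odd k) :
    (∀ T : Finset (ZMod k), T.card = 4 → (transOrbit k T).ncard = k) ∧
    (transOrbits4 k).ncard = (k - 1) * (k - 2) * (k - 3) / 24 := by
  have hkpos : 0 < k := by omega
  haveI : NeZero k := ⟨by omega⟩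
  have hcardZ : Fintype.card (ZMod k) = k := ZMod.card k
  -- orbit cardinality
  have horbcard : ∀ T : Finset (ZMod k), T.card = 4 → (orbitF k T).card = k := by
    intro T hT
    rw [orbitF, Finset.card_image_of_injective _ (map_inj k hodd T hT),
      Finset.card_univ, hcardZ]
  have horb : ∀ T : Finset (ZMod k), T.card = 4 → (transOrbit k T).ncard = k := by
    intro T hT
    rw [← orbitF_coe, Set.ncard_coe_finset, horbcard T hT]
  refine ⟨horb, ?_⟩
  -- counting
  classical
  set A : Finset (Finset (ZMod k)) := Finset.univ.filter (fun T => T.card = 4) with hA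
  have hAcard : A.card = k.choose 4 := by
    have hpow : A = Finset.powersetCard 4 (Finset.univ : Finset (ZMod k)) := by
      ext S
      simp [hA, Finset.mem_powersetCard]
    rw [hpow, Finset.card_powersetCard, Finset.card_univ, hcardZ]
  -- membership in orbit preserves card
  have hcard_mem : ∀ T S : Finset (ZMod k), S ∈ orbitF k T → S.card = T.card := by
    intro T S hS
    simp only [orbitF, Finset.mem_image] at hS
    obtain ⟨d, _, rfl⟩ := hS
    exact Finset.card_image_of_injective _ (trans_inj k d)
  -- orbit equality when in same orbit
  have horbit_eq : ∀ T S : Finset (ZMod k), S ∈ orbitF k T → orbitF k S = orbitF k T := by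
    intro T S hS
    simp only [orbitF, Finset.mem_image] at hS
    obtain ⟨d, _, rfl⟩ := hS
    ext U
    simp only [orbitF, Finset.mem_image, Finset.image_image]
    constructor
    · rintro ⟨e, _, rfl⟩
      exact ⟨d + e, Finset.mem_univ _, by ext x; simp [add_assoc]⟩
    · rintro ⟨e, _, rfl⟩
      exact ⟨e - d, Finset.mem_univ _, by ext x; simp [add_assoc, Function.comp]⟩
  have hself : ∀ T : Finset (ZMod k), T ∈ orbitF k T := by
    intro T
    simp only [orbitF, Finset.mem_image]
    exact ⟨0, Finset.mem_univ _, by simp⟩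
  set B : Finset (Finset (Finset (ZMod k))) := A.image (orbitF k) with hB
  -- fiberwise count
  have hfib : ∀ q ∈ B, (A.filter (fun T => orbitF k T = q)).card = k := by
    intro q hq
    simp only [hB, Finset.mem_image] at hq
    obtain ⟨T, hTA, rfl⟩ := hq
    have hT4 : T.card = 4 := by simpa [hA] using hTA
    have : A.filter (fun S => orbitF k S = orbitF k T) = orbitF k T := by
      ext S
      simp only [Finset.mem_filter, hA, Finset.mem_univ, true_and]
      constructor
      · rintro ⟨_, hS⟩
        rw [← hS]; exact hself S
      · intro hS
        exact ⟨(hcard_mem T S hS).trans hT4, horbit_eq T S hS⟩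
    rw [this, horbcard T hT4]
  have hcount : A.card = B.card * k := by
    rw [Finset.card_eq_sum_card_fiberwise (f := orbitF k) (t := B)
      (fun T hT => Finset.mem_image_of_mem _ hT)]
    rw [Finset.sum_congr rfl hfib, Finset.sum_const, smul_eq_mul]
  -- transOrbits4 = coe '' B
  have himg : transOrbits4 k = ((↑) : Finset (Finset (ZMod k)) → Set (Finset (ZMod k))) '' (B : Set (Finset (Finset (ZMod k)))) := by
    ext O
    simp only [transOrbits4, Set.mem_image, Set.mem_setOf_eq, Finset.mem_coe, hB,
      Finset.mem_image, hA, Finset.mem_filter, Finset.mem_univ, true_and]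
    constructor
    · rintro ⟨T, hT4, rfl⟩
      exact ⟨orbitF k T, ⟨T, hT4, rfl⟩, orbitF_coe k T⟩
    · rintro ⟨q, ⟨T, hT4, rfl⟩, rfl⟩
      exact ⟨T, hT4, orbitF_coe k T⟩
  have hncard : (transOrbits4 k).ncard = B.card := by
    rw [himg, Set.ncard_image_of_injective _ Finset.coe_injective, Set.ncard_coe_finset]
  rw [hncard]
  -- arithmetic
  have hchoose : k.choose 4 * 24 = k * ((k - 1) * (k - 2) * (k - 3)) := by
    obtain ⟨m, hm⟩ : ∃ m, k = m + 4 := ⟨k - 4, by omega⟩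
    subst hm
    have h := Nat.descFactorial_eq_factorial_mul_choose (m + 4) 4
    simp [Nat.descFactorial_succ, Nat.factorial] at h
    have h1 : (m+4) - 1 = m + 3 := by omega
    have h2 : (m+4) - 2 = m + 2 := by omega
    have h3 : (m+4) - 3 = m + 1 := by omega
    rw [h1, h2, h3]
    nlinarith [h]
  have h24 : B.card * 24 = (k - 1) * (k - 2) * (k - 3) := by
    have : B.card * k * 24 = k * ((k - 1) * (k - 2) * (k - 3)) := by
      rw [← hcount, hAcard, hchoose]
    have := Nat.eq_of_mul_eq_mul_left hkpos (by linarith [this] : k * (B.card * 24) = k * ((k - 1) * (k - 2) * (k - 3)))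
    exact this
  omega
end

section
/- Let k ≥ 6 be a natural number with k ≡ 2 (mod 4). Then exactly ⌊k/4⌋ of the translation-orbits of 4-element subsets of ZMod k have size k/2 (namely the classes [a,b,a] with 1 ≤ a ≤ b and a + b = k/2), and every other translation-orbit has size k. -/
namespace TO4aux
open Finset

variable {k : ℕ}

lemma cast_eq_iff (p q : ℕ) (hp : p < 2*k) (hq : q < 2*k) :
    ((p:ZMod k) = (q:ZMod k)) ↔ (p = q ∨ p + k = q ∨ q + k = p) := by
  rw [ZMod.natCast_eq_natCast_iff]
  constructor
  · intro h
    rcases le_total p q with hle | hle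
    · obtain ⟨c, hc⟩ := (Nat.modEq_iff_dvd' hle).mp h
      match c with
      | 0 => left; omega
      | 1 => right; left; omega
      | (c+2) =>
        exfalso
        have h2 : 2*k ≤ k*(c+2) := by
          calc 2*k = k*2 := by ring
          _ ≤ k*(c+2) := Nat.mul_le_mul_left k (by omega)
        have h4 : 2*k ≤ q - p := hc ▸ h2
        omega
    · obtain ⟨c, hc⟩ := (Nat.modEq_iff_dvd' hle).mp h.symm
      match c with
      | 0 => left; omega
      | 1 => right; right; omega
      | (c+2) =>
        exfalso
        have h2 : 2*k ≤ k*(c+2) := by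
          calc 2*k = k*2 := by ring
          _ ≤ k*(c+2) := Nat.mul_le_mul_left k (by omega)
        have h4 : 2*k ≤ p - q := hc ▸ h2
        omega
  · rintro (rfl | h | h)
    · rfl
    · exact ((Nat.modEq_iff_dvd' (by omega)).mpr ⟨1, by omega⟩)
    · exact ((Nat.modEq_iff_dvd' (by omega)).mpr ⟨1, by omega⟩).symm

lemma cast_ne (p q : ℕ) (hp : p < 2*k) (hq : q < 2*k)
    (h : ¬(p = q ∨ p + k = q ∨ q + k = p)) : (p:ZMod k) ≠ (q:ZMod k) :=
  fun he => h ((cast_eq_iff p q hp hq).mp he)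

lemma shift_comp (T : Finset (ZMod k)) (c d : ZMod k) :
    (T.image (· + c)).image (· + d) = T.image (· + (c + d)) := by
  rw [Finset.image_image]
  congr 1
  funext x
  simp [Function.comp, add_assoc]

variable [NeZero k]

def stabF (k : ℕ) [NeZero k] (T : Finset (ZMod k)) : Finset (ZMod k) :=
  Finset.univ.filter (fun d => T.image (· + d) = T)

lemma mem_stabF {T : Finset (ZMod k)} {d : ZMod k} :
    d ∈ stabF k T ↔ T.image (· + d) = T := by simp [stabF]

lemma zero_mem_stabF (T : Finset (ZMod k)) : (0 : ZMod k) ∈ stabF k T := by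
  simp only [stabF, mem_filter, mem_univ, true_and, add_zero, Finset.image_id']

lemma add_mem_stabF {T : Finset (ZMod k)} {a b : ZMod k}
    (ha : a ∈ stabF k T) (hb : b ∈ stabF k T) : a + b ∈ stabF k T := by
  rw [mem_stabF] at *
  rw [← shift_comp, ha, hb]

lemma orbit_card (T : Finset (ZMod k)) :
    ((Finset.univ : Finset (ZMod k)).image (fun d => T.image (· + d))).card
      * (stabF k T).card = k := by
  classical
  have h := Finset.card_eq_sum_card_fiberwise
    (s := (Finset.univ : Finset (ZMod k)))
    (t := Finset.univ.image (fun d => T.image (· + d)))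
    (f := fun d => T.image (· + d))
    (fun x _ => mem_image_of_mem _ (mem_univ x))
  rw [Finset.card_univ, ZMod.card] at h
  have hfib : ∀ b ∈ Finset.univ.image (fun d => T.image (· + d)),
      (Finset.univ.filter (fun d' => T.image (· + d') = b)).card = (stabF k T).card := by
    intro b hb
    obtain ⟨d, -, hd⟩ := mem_image.mp hb
    have heq : Finset.univ.filter (fun d' => T.image (· + d') = b)
        = (stabF k T).image (fun s => d + s) := by
      ext e
      simp only [mem_filter, mem_univ, true_and, mem_image, mem_stabF]
      constructor
      · intro he
        refine ⟨e - d, ?_, by ring⟩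
        have h1 : T.image (· + (e + -d)) = T := by
          rw [← shift_comp, he, ← hd, shift_comp, add_neg_cancel]
          simp
        rw [sub_eq_add_neg]
        exact h1
      · rintro ⟨s, hs, rfl⟩
        rw [add_comm d s, ← shift_comp, hs, hd]
    rw [heq, Finset.card_image_of_injective _ (add_right_injective d)]
  rw [Finset.sum_congr rfl hfib, Finset.sum_const, smul_eq_mul] at h
  exact h.symm

def stabH (k : ℕ) (T : Finset (ZMod k)) : AddSubgroup (ZMod k) where
  carrier := {d | T.image (· + d) = T}
  zero_mem' := by
    show T.image (· + 0) = T
    simp only [add_zero, Finset.image_id']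
  add_mem' := by
    intro a b ha hb
    show T.image (· + (a + b)) = T
    rw [← shift_comp, ha, hb]
  neg_mem' := by
    intro a ha
    show T.image (· + (-a)) = T
    calc T.image (· + (-a)) = (T.image (· + a)).image (· + (-a)) := by rw [ha]
    _ = T.image (· + (a + -a)) := shift_comp T a (-a)
    _ = T := by simp

lemma mem_stabH {T : Finset (ZMod k)} {d : ZMod k} :
    d ∈ stabH k T ↔ T.image (· + d) = T := Iff.rfl

lemma stab_dvd_four (T : Finset (ZMod k)) (hT : T.card = 4) : (stabF k T).card ∣ 4 := by
  classical
  have h := Finset.card_eq_sum_card_fiberwise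
    (s := T)
    (t := T.image (fun x => (QuotientAddGroup.mk x : ZMod k ⧸ stabH k T)))
    (f := fun x => (QuotientAddGroup.mk x : ZMod k ⧸ stabH k T))
    (fun x hx => mem_image_of_mem _ hx)
  have hfib : ∀ b ∈ T.image (fun x => (QuotientAddGroup.mk x : ZMod k ⧸ stabH k T)),
      (T.filter (fun x => (QuotientAddGroup.mk x : ZMod k ⧸ stabH k T) = b)).card
        = (stabF k T).card := by
    intro b hb
    obtain ⟨t, ht, hmk⟩ := mem_image.mp hb
    have heq : T.filter (fun x => (QuotientAddGroup.mk x : ZMod k ⧸ stabH k T) = b)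
        = (stabF k T).image (fun s => t + s) := by
      ext x
      simp only [mem_filter, mem_image, mem_stabF]
      constructor
      · rintro ⟨hxT, hx⟩
        refine ⟨x - t, ?_, by ring⟩
        have h1 : -x + t ∈ stabH k T := QuotientAddGroup.eq.mp (hx.trans hmk.symm)
        have h2 : -(-x + t) ∈ stabH k T := (stabH k T).neg_mem h1
        have h3 : x - t ∈ stabH k T := by
          have : -(-x + t) = x - t := by ring
          rwa [this] at h2
        exact h3
      · rintro ⟨s, hs, rfl⟩
        constructor
        · rw [← hs]; exact mem_image_of_mem _ ht
        · rw [← hmk]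
          apply QuotientAddGroup.eq.mpr
          have : -(t + s) + t = -s := by ring
          rw [this]
          exact (stabH k T).neg_mem hs
    rw [heq, Finset.card_image_of_injective _ (add_right_injective t)]
  rw [Finset.sum_congr rfl hfib, Finset.sum_const, smul_eq_mul, hT] at h
  exact Dvd.intro_left _ h.symm

lemma mbar_ne_zero (hk6 : 6 ≤ k) : ((k/2 : ℕ) : ZMod k) ≠ (0 : ZMod k) := by
  have h0 : (0 : ZMod k) = ((0:ℕ) : ZMod k) := by norm_cast
  rw [h0, ne_eq, cast_eq_iff _ _ (by omega) (by omega)]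
  omega

lemma mbar_add_self (hk6 : 6 ≤ k) (hmod : k % 4 = 2) :
    ((k/2 : ℕ) : ZMod k) + ((k/2 : ℕ) : ZMod k) = 0 := by
  rw [← Nat.cast_add, show k/2 + k/2 = k by omega, ZMod.natCast_self]

lemma two_torsion (hk6 : 6 ≤ k) (hmod : k % 4 = 2) {x : ZMod k}
    (hx : x + x = 0) (hx0 : x ≠ 0) : x = ((k/2 : ℕ) : ZMod k) := by
  have hv : ((x.val : ℕ) : ZMod k) = x := ZMod.natCast_rightInverse x
  have hvk : x.val < k := ZMod.val_lt x
  have h0 : (0 : ZMod k) = ((0:ℕ) : ZMod k) := by norm_cast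
  rw [← hv, ← Nat.cast_add, h0, cast_eq_iff _ _ (by omega) (by omega)] at hx
  rw [← hv, h0, ne_eq, cast_eq_iff _ _ (by omega) (by omega)] at hx0
  rw [← hv, cast_eq_iff _ _ (by omega) (by omega)]
  omega

lemma stab_card_one_or_two (hk6 : 6 ≤ k) (hmod : k % 4 = 2)
    (T : Finset (ZMod k)) (hT : T.card = 4) :
    (stabF k T).card = 1 ∨ (stabF k T).card = 2 := by
  have hd4 := stab_dvd_four T hT
  have hdk : (stabF k T).card ∣ k := Dvd.intro_left _ (orbit_card T)
  have h1 : 1 ≤ (stabF k T).card := Finset.card_pos.mpr ⟨0, zero_mem_stabF T⟩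
  have h4 : (stabF k T).card ≤ 4 := Nat.le_of_dvd (by norm_num) hd4
  interval_cases h : (stabF k T).card
  · left; rfl
  · right; rfl
  · exfalso; norm_num at hd4
  · exfalso; obtain ⟨c, hc⟩ := hdk; omega

lemma stab_card_two_of_mbar (hk6 : 6 ≤ k) (hmod : k % 4 = 2)
    (T : Finset (ZMod k)) (hT : T.card = 4)
    (hm : ((k/2 : ℕ) : ZMod k) ∈ stabF k T) : (stabF k T).card = 2 := by
  rcases stab_card_one_or_two hk6 hmod T hT with h | h
  · exfalso
    obtain ⟨x, hx⟩ := Finset.card_eq_one.mp h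
    have h0 := zero_mem_stabF T
    rw [hx, Finset.mem_singleton] at h0 hm
    exact mbar_ne_zero hk6 (hm.trans h0.symm)
  · exact h

lemma mbar_mem_of_stab_card_two (hk6 : 6 ≤ k) (hmod : k % 4 = 2)
    (T : Finset (ZMod k)) (h2 : (stabF k T).card = 2) :
    ((k/2 : ℕ) : ZMod k) ∈ stabF k T := by
  obtain ⟨x, y, hxy, hset⟩ := Finset.card_eq_two.mp h2
  have h0 := zero_mem_stabF T
  rw [hset, Finset.mem_insert, Finset.mem_singleton] at h0
  have hex : ∃ s : ZMod k, s ≠ 0 ∧ stabF k T = {0, s} := by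
    rcases h0 with h0 | h0
    · subst h0
      exact ⟨y, hxy.symm, hset⟩
    · subst h0
      exact ⟨x, hxy, by rw [hset, Finset.pair_comm]⟩
  obtain ⟨s, hs0, hsset⟩ := hex
  have hss : s + s ∈ stabF k T := by
    apply add_mem_stabF <;> · rw [hsset]; simp
  rw [hsset, Finset.mem_insert, Finset.mem_singleton] at hss
  rcases hss with hss | hss
  · have := two_torsion hk6 hmod hss hs0
    rw [hsset, ← this]
    simp
  · exfalso
    exact hs0 (add_eq_left.mp hss)

lemma transOrbit_ncard (T : Finset (ZMod k)) :
    (transOrbit k T).ncard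
      = ((Finset.univ : Finset (ZMod k)).image (fun d => T.image (· + d))).card := by
  classical
  have h : transOrbit k T = ↑((Finset.univ : Finset (ZMod k)).image (fun d => T.image (· + d))) := by
    ext S
    simp [transOrbit, eq_comm]
  rw [h, Set.ncard_coe_finset]

lemma orbit_eq {T T' : Finset (ZMod k)} (h : T ∈ transOrbit k T') :
    transOrbit k T = transOrbit k T' := by
  obtain ⟨d, rfl⟩ := h
  ext S
  simp only [transOrbit, Set.mem_setOf_eq]
  constructor
  · rintro ⟨e, rfl⟩
    exact ⟨d + e, shift_comp T' d e⟩
  · rintro ⟨e, rfl⟩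
    exact ⟨e - d, by rw [shift_comp, show d + (e - d) = e by ring]⟩

lemma transClass_eq_orbit (x y z : ℕ) :
    transClass k x y z
      = transOrbit k ({0, (x:ZMod k), (x:ZMod k)+(y:ZMod k),
          (x:ZMod k)+(y:ZMod k)+(z:ZMod k)} : Finset (ZMod k)) := by
  have himg : ∀ i : ZMod k,
      ({0, (x:ZMod k), (x:ZMod k)+(y:ZMod k), (x:ZMod k)+(y:ZMod k)+(z:ZMod k)} :
        Finset (ZMod k)).image (· + i)
      = {i, i + (x:ZMod k), i + (x:ZMod k) + (y:ZMod k),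
          i + (x:ZMod k) + (y:ZMod k) + (z:ZMod k)} := by
    intro i
    simp only [Finset.image_insert, Finset.image_singleton]
    rw [zero_add, show (x:ZMod k) + i = i + (x:ZMod k) by ring,
      show (x:ZMod k)+(y:ZMod k) + i = i + (x:ZMod k) + (y:ZMod k) by ring,
      show (x:ZMod k)+(y:ZMod k)+(z:ZMod k) + i = i + (x:ZMod k) + (y:ZMod k) + (z:ZMod k) by ring]
  ext S
  simp only [transClass, transOrbit, Set.mem_setOf_eq]
  constructor
  · rintro ⟨i, rfl⟩
    exact ⟨i, (himg i).symm⟩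
  · rintro ⟨d, rfl⟩
    exact ⟨d, himg d⟩

lemma quad_stab (hk6 : 6 ≤ k) (hmod : k % 4 = 2) (t s : ZMod k) :
    ((k/2:ℕ):ZMod k) ∈ stabF k
      ({t, t + ((k/2:ℕ):ZMod k), s, s + ((k/2:ℕ):ZMod k)} : Finset (ZMod k)) := by
  rw [mem_stabF]
  have hmb2 := mbar_add_self hk6 hmod
  simp only [Finset.image_insert, Finset.image_singleton]
  rw [add_assoc t ((k/2:ℕ):ZMod k) ((k/2:ℕ):ZMod k), hmb2, add_zero,
    add_assoc s ((k/2:ℕ):ZMod k) ((k/2:ℕ):ZMod k), hmb2, add_zero]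
  ext w; simp only [Finset.mem_insert, Finset.mem_singleton]; tauto

lemma main_sub (hk6 : 6 ≤ k) (hmod : k % 4 = 2) (t s : ZMod k)
    (hv0 : 0 < (s - t).val) (hvm : (s - t).val < k / 2) :
    ∃ a b : ℕ, 1 ≤ a ∧ a ≤ b ∧ a + b = k / 2 ∧
      ({t, t + ((k/2:ℕ):ZMod k), s, s + ((k/2:ℕ):ZMod k)} : Finset (ZMod k))
        ∈ transClass k a b a := by
  have hcast : (((s - t).val :ℕ) : ZMod k) = s - t := ZMod.natCast_rightInverse _
  set mb : ZMod k := ((k/2:ℕ):ZMod k) with hmb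
  set v := (s - t).val with hv
  have hbcast : ((k/2 - v : ℕ) : ZMod k) = mb - (s - t) := by
    rw [Nat.cast_sub (le_of_lt hvm), hcast]
  rcases le_or_gt v (k/2 - v) with hle | hlt
  · refine ⟨v, k/2 - v, hv0, hle, by omega, t, ?_⟩
    have e1 : t + (v : ZMod k) = s := by rw [hcast]; ring
    have e2 : t + (v:ZMod k) + ((k/2-v:ℕ):ZMod k) = t + mb := by rw [hcast, hbcast]; ring
    have e3 : t + (v:ZMod k) + ((k/2-v:ℕ):ZMod k) + (v:ZMod k) = s + mb := by
      rw [hcast, hbcast]; ring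
    rw [e3, e2, e1]
    ext w; simp only [Finset.mem_insert, Finset.mem_singleton]; tauto
  · have hmb2 : mb + mb = 0 := mbar_add_self hk6 hmod
    refine ⟨k/2 - v, v, by omega, by omega, by omega, s, ?_⟩
    have e1 : s + ((k/2-v:ℕ):ZMod k) = t + mb := by rw [hbcast]; ring
    have e2 : s + ((k/2-v:ℕ):ZMod k) + (v:ZMod k) = s + mb := by rw [hbcast, hcast]; ring
    have e3 : s + ((k/2-v:ℕ):ZMod k) + (v:ZMod k) + ((k/2-v:ℕ):ZMod k) = t := by
      rw [hbcast, hcast]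
      have h4 : s + (mb - (s - t)) + (s - t) + (mb - (s - t)) = t + (mb + mb) := by ring
      rw [h4, hmb2, add_zero]
    rw [e3, e2, e1]
    ext w; simp only [Finset.mem_insert, Finset.mem_singleton]; tauto

lemma card4 {α : Type*} [DecidableEq α] {x y z w : α}
    (h1 : x ≠ y) (h2 : x ≠ z) (h3 : x ≠ w) (h4 : y ≠ z) (h5 : y ≠ w) (h6 : z ≠ w) :
    ({x, y, z, w} : Finset α).card = 4 := by
  rw [Finset.card_insert_of_notMem (by simp [h1, h2, h3]),
    Finset.card_insert_of_notMem (by simp [h4, h5]),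
    Finset.card_insert_of_notMem (by simp [h6]), Finset.card_singleton]

lemma base_cast (a b : ℕ) (hsum : a + b = k/2) :
    ({0, (a:ZMod k), (a:ZMod k)+(b:ZMod k), (a:ZMod k)+(b:ZMod k)+(a:ZMod k)} :
        Finset (ZMod k))
      = {((0:ℕ):ZMod k), ((a:ℕ):ZMod k), ((k/2:ℕ):ZMod k), ((k/2+a:ℕ):ZMod k)} := by
  have h1 : (a:ZMod k)+(b:ZMod k) = ((k/2:ℕ):ZMod k) := by rw [← Nat.cast_add, hsum]
  rw [h1, ← Nat.cast_add]
  norm_cast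

lemma base_card (hk6 : 6 ≤ k) (hmod : k % 4 = 2) (a b : ℕ)
    (ha1 : 1 ≤ a) (hab : a ≤ b) (hsum : a + b = k/2) :
    ({0, (a:ZMod k), (a:ZMod k)+(b:ZMod k), (a:ZMod k)+(b:ZMod k)+(a:ZMod k)} :
        Finset (ZMod k)).card = 4 := by
  rw [base_cast a b hsum]
  exact card4
    (cast_ne _ _ (by omega) (by omega) (by omega))
    (cast_ne _ _ (by omega) (by omega) (by omega))
    (cast_ne _ _ (by omega) (by omega) (by omega))
    (cast_ne _ _ (by omega) (by omega) (by omega))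
    (cast_ne _ _ (by omega) (by omega) (by omega))
    (cast_ne _ _ (by omega) (by omega) (by omega))

lemma base_quad (hk6 : 6 ≤ k) (hmod : k % 4 = 2) (a b : ℕ) (hsum : a + b = k/2) :
    ({0, (a:ZMod k), (a:ZMod k)+(b:ZMod k), (a:ZMod k)+(b:ZMod k)+(a:ZMod k)} :
        Finset (ZMod k))
      = {(0:ZMod k), 0 + ((k/2:ℕ):ZMod k), (a:ZMod k), (a:ZMod k) + ((k/2:ℕ):ZMod k)} := by
  have h1 : (a:ZMod k)+(b:ZMod k) = ((k/2:ℕ):ZMod k) := by rw [← Nat.cast_add, hsum]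
  rw [h1, zero_add, add_comm ((k/2:ℕ):ZMod k) (a:ZMod k)]
  ext w; simp only [Finset.mem_insert, Finset.mem_singleton]; tauto

lemma class_inj (hk6 : 6 ≤ k) (hmod : k % 4 = 2) {a b a' b' : ℕ}
    (ha1 : 1 ≤ a) (hab : a ≤ b) (hsum : a + b = k/2)
    (ha1' : 1 ≤ a') (hab' : a' ≤ b') (hsum' : a' + b' = k/2)
    (h : transClass k a b a = transClass k a' b' a') : a = a' := by
  have hmem : ({(0:ZMod k), 0 + (a:ZMod k), 0 + (a:ZMod k) + (b:ZMod k),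
      0 + (a:ZMod k) + (b:ZMod k) + (a:ZMod k)} : Finset (ZMod k))
      ∈ transClass k a b a := ⟨0, rfl⟩
  rw [h] at hmem
  obtain ⟨i, hT⟩ := hmem
  have hi : ((i.val : ℕ) : ZMod k) = i := ZMod.natCast_rightInverse i
  have hjk : i.val < k := ZMod.val_lt i
  set j := i.val with hj
  have H1 : i ∈ ({(0:ZMod k), 0 + (a:ZMod k), 0 + (a:ZMod k) + (b:ZMod k),
      0 + (a:ZMod k) + (b:ZMod k) + (a:ZMod k)} : Finset (ZMod k)) := by
    rw [hT]; simp
  have H2 : (0:ZMod k) + (a:ZMod k) ∈ ({i, i + (a':ZMod k), i + (a':ZMod k) + (b':ZMod k),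
      i + (a':ZMod k) + (b':ZMod k) + (a':ZMod k)} : Finset (ZMod k)) := by
    rw [← hT]; simp
  have H3 : (0:ZMod k) ∈ ({i, i + (a':ZMod k), i + (a':ZMod k) + (b':ZMod k),
      i + (a':ZMod k) + (b':ZMod k) + (a':ZMod k)} : Finset (ZMod k)) := by
    rw [← hT]; simp
  have h0 : (0 : ZMod k) = ((0:ℕ) : ZMod k) := by norm_cast
  simp only [Finset.mem_insert, Finset.mem_singleton, zero_add] at H1 H2 H3
  rw [← hi] at H1 H2 H3
  rw [h0] at H1 H3
  simp only [← Nat.cast_add] at H1 H2 H3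
  simp (disch := omega) only [cast_eq_iff] at H1 H2 H3
  omega

end TO4aux

open TO4aux in
/-- For `k ≥ 6` with `k ≡ 2 (mod 4)`, the translation orbits of 4-element subsets of
`ZMod k` of size `k/2` are exactly the classes `[a,b,a]` with `1 ≤ a ≤ b` and
`a + b = k/2`; there are exactly `⌊k/4⌋` of them, and every other orbit has size `k`. -/
theorem transOrbits4_two_mod_four (k : ℕ) (hk : 6 ≤ k) (hmod : k % 4 = 2) :
    { O ∈ transOrbits4 k | O.ncard = k / 2 }
      = { O | ∃ a b : ℕ, 1 ≤ a ∧ a ≤ b ∧ a + b = k / 2 ∧ O = transClass k a b a } ∧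
    { O ∈ transOrbits4 k | O.ncard = k / 2 }.ncard = k / 4 ∧
    (∀ O ∈ transOrbits4 k, O.ncard ≠ k / 2 → O.ncard = k) := by
  haveI : NeZero k := ⟨by omega⟩
  have hQ : ∀ T : Finset (ZMod k), (transOrbit k T).ncard * (stabF k T).card = k := by
    intro T; rw [transOrbit_ncard]; exact orbit_card T
  have hclass : ∀ a b : ℕ, 1 ≤ a → a ≤ b → a + b = k/2 →
      transClass k a b a ∈ transOrbits4 k ∧ (transClass k a b a).ncard = k/2 := by
    intro a b ha1 hab hsum
    have hB4 : ({0, (a:ZMod k), (a:ZMod k)+(b:ZMod k), (a:ZMod k)+(b:ZMod k)+(a:ZMod k)} :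
        Finset (ZMod k)).card = 4 := base_card hk hmod a b ha1 hab hsum
    have hCO : transClass k a b a
        = transOrbit k ({0, (a:ZMod k), (a:ZMod k)+(b:ZMod k),
            (a:ZMod k)+(b:ZMod k)+(a:ZMod k)} : Finset (ZMod k)) :=
      transClass_eq_orbit a b a
    have hstab2 : (stabF k ({0, (a:ZMod k), (a:ZMod k)+(b:ZMod k),
        (a:ZMod k)+(b:ZMod k)+(a:ZMod k)} : Finset (ZMod k))).card = 2 := by
      apply stab_card_two_of_mbar hk hmod _ hB4
      rw [base_quad hk hmod a b hsum]
      exact quad_stab hk hmod 0 (a:ZMod k)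
    have hcard := hQ ({0, (a:ZMod k), (a:ZMod k)+(b:ZMod k),
        (a:ZMod k)+(b:ZMod k)+(a:ZMod k)} : Finset (ZMod k))
    rw [hstab2] at hcard
    refine ⟨⟨_, hB4, hCO⟩, ?_⟩
    rw [hCO]; omega
  have part1 : { O ∈ transOrbits4 k | O.ncard = k / 2 }
      = { O | ∃ a b : ℕ, 1 ≤ a ∧ a ≤ b ∧ a + b = k / 2 ∧ O = transClass k a b a } := by
    ext O
    simp only [Set.mem_setOf_eq, Set.mem_sep_iff]
    constructor
    · rintro ⟨⟨T, hT4, rfl⟩, hn⟩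
      have hcard := hQ T
      have hstab2 : (stabF k T).card = 2 := by
        rcases stab_card_one_or_two hk hmod T hT4 with h | h
        · exfalso; rw [h, mul_one] at hcard; omega
        · exact h
      have hm := mbar_mem_of_stab_card_two hk hmod T hstab2
      rw [mem_stabF] at hm
      have hmb0 : ((k/2:ℕ):ZMod k) ≠ 0 := mbar_ne_zero hk
      have hmb2 : ((k/2:ℕ):ZMod k) + ((k/2:ℕ):ZMod k) = 0 := mbar_add_self hk hmod
      set mb : ZMod k := ((k/2:ℕ):ZMod k) with hmbdef
      obtain ⟨t, ht⟩ := Finset.card_pos.mp (by omega : 0 < T.card)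
      have htm : t + mb ∈ T := by rw [← hm]; exact Finset.mem_image_of_mem _ ht
      have htne : t + mb ≠ t := fun hc => hmb0 (add_eq_left.mp hc)
      have hsub : ({t, t + mb} : Finset (ZMod k)) ⊆ T := by
        simp [Finset.insert_subset_iff, ht, htm]
      have hcard2 : ({t, t+mb} : Finset (ZMod k)).card = 2 := Finset.card_pair (Ne.symm htne)
      have hdiff : 0 < (T \ {t, t+mb}).card := by
        rw [Finset.card_sdiff_of_subset hsub, hT4, hcard2]; omega
      obtain ⟨s, hs⟩ := Finset.card_pos.mp hdiff
      rw [Finset.mem_sdiff] at hs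
      obtain ⟨hsT, hsnot⟩ := hs
      simp only [Finset.mem_insert, Finset.mem_singleton] at hsnot
      push_neg at hsnot
      obtain ⟨hst, hstm⟩ := hsnot
      have hsm : s + mb ∈ T := by rw [← hm]; exact Finset.mem_image_of_mem _ hsT
      have hquadsub : ({t, t+mb, s, s+mb} : Finset (ZMod k)) ⊆ T := by
        simp [Finset.insert_subset_iff, ht, htm, hsT, hsm]
      have hne1 : s + mb ≠ t := by
        intro hc; apply hstm; rw [← hc, add_assoc, hmb2, add_zero]
      have hne2 : s + mb ≠ t + mb := fun hc => hst (add_right_cancel hc)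
      have hne3 : s + mb ≠ s := fun hc => hmb0 (add_eq_left.mp hc)
      have hquadcard : ({t, t+mb, s, s+mb} : Finset (ZMod k)).card = 4 :=
        card4 (Ne.symm htne) (Ne.symm hst) (Ne.symm hne1) (Ne.symm hstm)
          (Ne.symm hne2) (Ne.symm hne3)
      have hTeq : T = {t, t+mb, s, s+mb} :=
        (Finset.eq_of_subset_of_card_le hquadsub (by rw [hT4, hquadcard])).symm
      have hv0 : (s - t).val ≠ 0 := by
        intro hc
        exact hst (sub_eq_zero.mp (ZMod.val_eq_zero _ |>.mp hc))
      have hvm : (s - t).val ≠ k/2 := by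
        intro hc
        apply hstm
        have h1 : (((s-t).val : ℕ) : ZMod k) = s - t := ZMod.natCast_rightInverse _
        rw [hc] at h1
        rw [hmbdef, h1]
        ring
      have hvk : (s - t).val < k := ZMod.val_lt _
      rcases lt_or_gt_of_ne hvm with hlt | hgt
      · obtain ⟨a, b, ha1, hab, hsum, hmemcl⟩ := main_sub hk hmod t s (by omega) hlt
        refine ⟨a, b, ha1, hab, hsum, ?_⟩
        have hco := transClass_eq_orbit (k := k) a b a
        rw [hco] at hmemcl
        rw [hTeq, hco]
        exact orbit_eq hmemcl
      · have hs'rep : (s + mb) - t = (s - t) + mb := by ring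
        have hvval : ((s + mb) - t).val = (s - t).val - k/2 := by
          have h1 : (((s-t).val : ℕ) : ZMod k) = s - t := ZMod.natCast_rightInverse _
          have h4 : (s + mb) - t = (((s - t).val + k/2 : ℕ) : ZMod k) := by
            rw [Nat.cast_add, h1, hmbdef]; ring
          rw [h4, ZMod.val_natCast, Nat.mod_eq_sub_mod (by omega),
            Nat.mod_eq_of_lt (by omega)]
          omega
        have hquadeq : ({t, t+mb, s + mb, (s + mb)+mb} : Finset (ZMod k))
            = {t, t+mb, s, s+mb} := by
          have h3 : (s + mb) + mb = s := by rw [add_assoc, hmb2, add_zero]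
          rw [h3]
          ext w; simp only [Finset.mem_insert, Finset.mem_singleton]; tauto
        obtain ⟨a, b, ha1, hab, hsum, hmemcl⟩ :=
          main_sub hk hmod t (s + mb) (by omega) (by omega)
        refine ⟨a, b, ha1, hab, hsum, ?_⟩
        rw [hquadeq] at hmemcl
        have hco := transClass_eq_orbit (k := k) a b a
        rw [hco] at hmemcl
        rw [hTeq, hco]
        exact orbit_eq hmemcl
    · rintro ⟨a, b, ha1, hab, hsum, rfl⟩
      exact hclass a b ha1 hab hsum
  refine ⟨part1, ?_, ?_⟩
  · rw [part1]
    have himg : { O | ∃ a b : ℕ, 1 ≤ a ∧ a ≤ b ∧ a + b = k / 2 ∧ O = transClass k a b a }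
        = (fun a => transClass k a (k/2 - a) a) '' (Set.Icc 1 (k/4)) := by
      ext O
      simp only [Set.mem_setOf_eq, Set.mem_image, Set.mem_Icc]
      constructor
      · rintro ⟨a, b, ha1, hab, hsum, rfl⟩
        refine ⟨a, ⟨ha1, by omega⟩, ?_⟩
        rw [show k/2 - a = b by omega]
      · rintro ⟨a, ⟨ha1, hale⟩, rfl⟩
        exact ⟨a, k/2 - a, ha1, by omega, by omega, rfl⟩
    rw [himg, Set.ncard_image_of_injOn, ← Finset.coe_Icc, Set.ncard_coe_finset,
      Nat.card_Icc]
    · omega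
    · intro a ha a' ha' heq
      simp only [Set.mem_Icc] at ha ha'
      exact class_inj hk hmod ha.1 (by omega) (by omega) ha'.1 (by omega) (by omega) heq
  · rintro O ⟨T, hT4, rfl⟩ hne
    have hcard := hQ T
    rcases stab_card_one_or_two hk hmod T hT4 with h | h
    · rw [h, mul_one] at hcard; exact hcard
    · exfalso; rw [h] at hcard; exact hne (by omega)
end

section
/- Let k ≥ 8 be a natural number with k ≡ 0 (mod 4). Then among the translation-orbits of 4-element subsets of ZMod k there is exactly one orbit of size k/4 (the class [k/4,k/4,k/4]), there are exactly k/4 − 1 orbits of size k/2 (the classes [a,b,a] with 1 ≤ a < b and a + b = k/2), and every other orbit has size k. -/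
namespace TO4

variable {k : ℕ}

lemma image_add_add (T : Finset (ZMod k)) (a b : ZMod k) :
    (T.image (· + a)).image (· + b) = T.image (· + (a + b)) := by
  rw [Finset.image_image]
  simp [Function.comp_def, add_assoc]

lemma image_add_zero (T : Finset (ZMod k)) : T.image (· + (0 : ZMod k)) = T := by
  simp only [add_zero]
  exact Finset.image_id

/-- The stabilizer of `T` under translations, as an `AddSubgroup`. -/
def stab (k : ℕ) (T : Finset (ZMod k)) : AddSubgroup (ZMod k) where
  carrier := {d | T.image (· + d) = T}
  zero_mem' := image_add_zero _
  add_mem' := by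
    intro a b ha hb
    simp only [Set.mem_setOf_eq] at *
    rw [← image_add_add, ha, hb]
  neg_mem' := by
    intro a ha
    simp only [Set.mem_setOf_eq] at *
    conv_lhs => rw [← ha]
    rw [image_add_add]
    simp

lemma mem_stab {T : Finset (ZMod k)} {d : ZMod k} :
    d ∈ stab k T ↔ T.image (· + d) = T := Iff.rfl

lemma self_mem_transOrbit (T : Finset (ZMod k)) : T ∈ transOrbit k T :=
  ⟨0, (image_add_zero T).symm⟩

lemma transOrbit_eq_of_mem {T S : Finset (ZMod k)} (h : S ∈ transOrbit k T) :
    transOrbit k S = transOrbit k T := by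
  obtain ⟨d, rfl⟩ := h
  ext U
  constructor
  · rintro ⟨e, rfl⟩
    exact ⟨d + e, by rw [image_add_add]⟩
  · rintro ⟨e, rfl⟩
    refine ⟨e - d, ?_⟩
    have : d + (e - d) = e := by ring
    rw [image_add_add, this]

lemma card_image_add (T : Finset (ZMod k)) (d : ZMod k) :
    (T.image (· + d)).card = T.card :=
  Finset.card_image_of_injective _ (add_left_injective d)


lemma image_eq_iff {T : Finset (ZMod k)} {d e : ZMod k} :
    T.image (· + d) = T.image (· + e) ↔ T.image (· + (d - e)) = T := by
  constructor
  · intro h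
    have h2 := congrArg (Finset.image (· + (-e))) h
    rw [image_add_add, image_add_add] at h2
    rw [show e + -e = 0 by ring, image_add_zero] at h2
    rw [show d + -e = d - e by ring] at h2
    exact h2
  · intro h
    have h2 := congrArg (Finset.image (· + e)) h
    rw [image_add_add] at h2
    rw [show d - e + e = d by ring] at h2
    exact h2

variable [NeZero k]

lemma orbit_eq_coe (T : Finset (ZMod k)) :
    transOrbit k T = ↑(Finset.univ.image (fun d : ZMod k => T.image (· + d))) := by
  ext S
  simp [transOrbit, eq_comm]

lemma stab_coe_eq (T : Finset (ZMod k)) :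
    (stab k T : Set (ZMod k)) =
      ↑(Finset.univ.filter (fun d : ZMod k => T.image (· + d) = T)) := by
  ext d
  simp [mem_stab]

lemma natCard_stab_eq (T : Finset (ZMod k)) :
    Nat.card (stab k T) =
      (Finset.univ.filter (fun d : ZMod k => T.image (· + d) = T)).card := by
  rw [← SetLike.coe_sort_coe, Nat.card_coe_set_eq, stab_coe_eq, Set.ncard_coe_finset]

lemma orbit_ncard_mul_stab (T : Finset (ZMod k)) :
    (transOrbit k T).ncard * Nat.card (stab k T) = k := by
  classical
  set f : ZMod k → Finset (ZMod k) := fun d => T.image (· + d) with hf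
  set Sf : Finset (ZMod k) := Finset.univ.filter (fun d => f d = T) with hSf
  have horb : (transOrbit k T).ncard = (Finset.univ.image f).card := by
    rw [orbit_eq_coe, Set.ncard_coe_finset]
  have hstab : Nat.card (stab k T) = Sf.card := natCard_stab_eq T
  rw [horb, hstab]
  have key : ∀ b ∈ Finset.univ.image f,
      (Finset.univ.filter (fun d => f d = b)).card = Sf.card := by
    intro b hb
    obtain ⟨e, -, rfl⟩ := Finset.mem_image.mp hb
    apply Finset.card_bij (fun d _ => d - e)
    · intro d hd
      simp only [Finset.mem_filter, Finset.mem_univ, true_and] at hd ⊢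
      rw [hSf]
      simp only [Finset.mem_filter, Finset.mem_univ, true_and]
      exact image_eq_iff.mp hd
    · intro a _ b _ h
      exact sub_left_injective h
    · intro s hs
      refine ⟨s + e, ?_, by ring⟩
      simp only [hSf, Finset.mem_filter, Finset.mem_univ, true_and] at hs ⊢
      exact image_eq_iff.mpr (by rwa [add_sub_cancel_right])
  have := Finset.card_eq_sum_card_image f (Finset.univ : Finset (ZMod k))
  rw [Finset.sum_congr rfl key, Finset.sum_const, smul_eq_mul] at this
  rw [← this]
  simp [ZMod.card]

lemma card_smul_stab_eq_zero {T : Finset (ZMod k)} {d : ZMod k} (hd : d ∈ stab k T) :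
    (Nat.card (stab k T)) • d = 0 := by
  have h : (Nat.card (stab k T)) • (⟨d, hd⟩ : stab k T) = 0 := card_nsmul_eq_zero'
  have h2 := congrArg (Subtype.val) h
  rw [AddSubgroup.coe_nsmul] at h2
  exact h2

omit [NeZero k] in
lemma add_mem_of_mem_stab {T : Finset (ZMod k)} {d x : ZMod k}
    (hd : d ∈ stab k T) (hx : x ∈ T) : x + d ∈ T := by
  rw [mem_stab] at hd
  rw [← hd]
  exact Finset.mem_image_of_mem _ hx

lemma natCard_stab_le {T : Finset (ZMod k)} {x : ZMod k} (hx : x ∈ T) :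
    Nat.card (stab k T) ≤ T.card := by
  rw [natCard_stab_eq]
  apply Finset.card_le_card_of_injOn (fun d => x + d)
  · intro d hd
    simp only [Finset.mem_coe, Finset.mem_filter, Finset.mem_univ, true_and] at hd
    exact add_mem_of_mem_stab hd hx
  · intro a _ b _ h
    exact add_left_cancel h

lemma natCard_stab_ne_three {T : Finset (ZMod k)} (hT : T.card = 4) :
    Nat.card (stab k T) ≠ 3 := by
  intro h3
  have hpos : 1 < Nat.card (stab k T) := by omega
  obtain ⟨d, hd, hd0⟩ : ∃ d ∈ stab k T, d ≠ 0 := by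
    by_contra hc
    push_neg at hc
    have hsub : (stab k T : Set (ZMod k)) ⊆ {0} := by
      intro d hd; exact hc d hd
    have := Set.ncard_le_ncard hsub (Set.finite_singleton 0)
    rw [Set.ncard_singleton] at this
    rw [← SetLike.coe_sort_coe, Nat.card_coe_set_eq] at h3
    omega
  have h3d : (3 : ℕ) • d = 0 := by rw [← h3]; exact card_smul_stab_eq_zero hd
  have hddd : d + d + d = 0 := by
    rw [← show (3 : ℕ) • d = d + d + d by module]; exact h3d
  have h2d0 : d + d ≠ 0 := by
    intro h
    exact hd0 (by linear_combination hddd - h)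
  obtain ⟨x, hx⟩ : ∃ x, x ∈ T := Finset.card_pos.mp (by omega) |>.imp fun _ h => h
  have hxd : x + d ∈ T := add_mem_of_mem_stab hd hx
  have hxdd : x + d + d ∈ T := add_mem_of_mem_stab hd hxd
  have hs3 : ({x, x + d, x + d + d} : Finset (ZMod k)).card = 3 := by
    rw [Finset.card_insert_of_notMem, Finset.card_insert_of_notMem,
      Finset.card_singleton]
    · simp only [Finset.mem_singleton]
      intro h
      exact hd0 (left_eq_add.mp h)
    · simp only [Finset.mem_insert, Finset.mem_singleton]
      rintro (h | h)
      · exact hd0 (left_eq_add.mp h)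
      · rw [add_assoc] at h
        exact h2d0 (left_eq_add.mp h)
  have hsub : ({x, x + d, x + d + d} : Finset (ZMod k)) ⊆ T := by
    intro t ht
    simp only [Finset.mem_insert, Finset.mem_singleton] at ht
    rcases ht with rfl | rfl | rfl <;> assumption
  have hdiff : (T \ {x, x + d, x + d + d}).card = 1 := by
    rw [Finset.card_sdiff_of_subset hsub, hT, hs3]
  obtain ⟨y, hy⟩ := Finset.card_eq_one.mp hdiff
  have hyT : y ∈ T \ {x, x + d, x + d + d} := by rw [hy]; exact Finset.mem_singleton_self y
  rw [Finset.mem_sdiff] at hyT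
  obtain ⟨hyT, hyn⟩ := hyT
  simp only [Finset.mem_insert, Finset.mem_singleton] at hyn
  push_neg at hyn
  obtain ⟨hy1, hy2, hy3⟩ := hyn
  have hydT : y + d ∈ T := add_mem_of_mem_stab hd hyT
  have hydn : y + d ∈ T \ ({x, x + d, x + d + d} : Finset (ZMod k)) := by
    rw [Finset.mem_sdiff]
    refine ⟨hydT, ?_⟩
    simp only [Finset.mem_insert, Finset.mem_singleton]
    push_neg
    refine ⟨?_, ?_, ?_⟩
    · intro h
      exact hy3 (by linear_combination h - hddd)
    · intro h
      exact hy1 (add_right_cancel h)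
    · intro h
      exact hy2 (add_right_cancel h)
  rw [hy, Finset.mem_singleton] at hydn
  exact hd0 ((left_eq_add.mp hydn.symm))

lemma nsmul_eq_zero_iff_dvd (c : ℕ) (d : ZMod k) : c • d = 0 ↔ k ∣ c * d.val := by
  have h1 : c • d = ((c * d.val : ℕ) : ZMod k) := by
    push_cast
    rw [ZMod.natCast_rightInverse d, nsmul_eq_mul]
  rw [h1, ZMod.natCast_eq_zero_iff]

lemma val_four_smul_zero {q : ℕ} (hq : 0 < q) (hk4 : k = 4 * q) {d : ZMod k}
    (h : (4 : ℕ) • d = 0) :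
    d.val = 0 ∨ d.val = q ∨ d.val = 2 * q ∨ d.val = 3 * q := by
  rw [nsmul_eq_zero_iff_dvd] at h
  have h' : 4 * q ∣ 4 * d.val := by rw [← hk4]; exact h
  have hq4 : q ∣ d.val := (Nat.mul_dvd_mul_iff_left (by norm_num : (0:ℕ) < 4)).mp h'
  obtain ⟨c, hc⟩ := hq4
  have hlt : q * c < 4 * q := by rw [← hc, ← hk4]; exact ZMod.val_lt d
  have hc4 : c < 4 := by
    by_contra hcon
    push_neg at hcon
    nlinarith
  interval_cases c <;> omega

lemma val_two_smul_zero {q : ℕ} (hq : 0 < q) (hk4 : k = 4 * q) {d : ZMod k}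
    (h : (2 : ℕ) • d = 0) :
    d.val = 0 ∨ d.val = 2 * q := by
  rw [nsmul_eq_zero_iff_dvd] at h
  have h' : 2 * (2 * q) ∣ 2 * d.val := by rw [show 2 * (2 * q) = k by omega]; exact h
  have hq2 : 2 * q ∣ d.val := (Nat.mul_dvd_mul_iff_left (by norm_num : (0:ℕ) < 2)).mp h'
  obtain ⟨c, hc⟩ := hq2
  have hlt : 2 * q * c < 4 * q := by rw [← hc, ← hk4]; exact ZMod.val_lt d
  have hc2 : c < 2 := by
    by_contra hcon
    push_neg at hcon
    nlinarith
  interval_cases c <;> omega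

lemma cast_val_eq (d : ZMod k) : ((d.val : ℕ) : ZMod k) = d := ZMod.natCast_rightInverse d

lemma natCast_inj {a b : ℕ} (ha : a < k) (hb : b < k) (h : (a : ZMod k) = b) : a = b := by
  rw [← ZMod.val_cast_of_lt ha, ← ZMod.val_cast_of_lt hb, h]

omit [NeZero k] in
lemma image_base (X Y Z i : ZMod k) :
    ({0, X, X + Y, X + Y + Z} : Finset (ZMod k)).image (· + i)
      = {i, i + X, i + X + Y, i + X + Y + Z} := by
  simp only [Finset.image_insert, Finset.image_singleton]
  rw [show (0 : ZMod k) + i = i from zero_add i, show X + i = i + X from add_comm X i,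
    show X + Y + i = i + X + Y by ring, show X + Y + Z + i = i + X + Y + Z by ring]

omit [NeZero k] in
lemma transClass_eq_orbit (x y z : ℕ) :
    transClass k x y z
      = transOrbit k ({0, (x : ZMod k), (x : ZMod k) + (y : ZMod k),
          (x : ZMod k) + (y : ZMod k) + (z : ZMod k)} : Finset (ZMod k)) := by
  ext T
  constructor
  · rintro ⟨i, rfl⟩
    exact ⟨i, (image_base _ _ _ i).symm⟩
  · rintro ⟨i, rfl⟩
    exact ⟨i, image_base _ _ _ i⟩

omit [NeZero k] in
lemma card_quad {a b c d : ZMod k} (h1 : a ≠ b) (h2 : a ≠ c) (h3 : a ≠ d)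
    (h4 : b ≠ c) (h5 : b ≠ d) (h6 : c ≠ d) :
    ({a, b, c, d} : Finset (ZMod k)).card = 4 := by
  rw [Finset.card_insert_of_notMem (by simp [h1, h2, h3]),
    Finset.card_insert_of_notMem (by simp [h4, h5]),
    Finset.card_insert_of_notMem (by simp [h6]), Finset.card_singleton]

lemma orbit_ncard_of_stab {T : Finset (ZMod k)} {c : ℕ} (hc : Nat.card (stab k T) = c)
    (hcpos : 0 < c) : (transOrbit k T).ncard = k / c := by
  have h := orbit_ncard_mul_stab T
  rw [hc] at h
  have h2 := Nat.mul_div_cancel (m := (transOrbit k T).ncard) hcpos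
  rw [h] at h2
  exact h2.symm

lemma cast_ne_zero_of {n : ℕ} (h0 : 0 < n) (hlt : n < k) : (n : ZMod k) ≠ 0 := by
  intro h
  have := ZMod.val_cast_of_lt hlt
  rw [h, ZMod.val_zero] at this
  omega

omit [NeZero k] in
lemma card_quad_translate (x : ZMod k) {X Y Z : ZMod k} (h1 : X ≠ 0) (h2 : X + Y ≠ 0)
    (h3 : X + Y + Z ≠ 0) (h4 : Y ≠ 0) (h5 : Y + Z ≠ 0) (h6 : Z ≠ 0) :
    ({x, x + X, x + X + Y, x + X + Y + Z} : Finset (ZMod k)).card = 4 :=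
  card_quad (fun h => h1 (by linear_combination -h))
    (fun h => h2 (by linear_combination -h))
    (fun h => h3 (by linear_combination -h))
    (fun h => h4 (by linear_combination -h))
    (fun h => h5 (by linear_combination -h))
    (fun h => h6 (by linear_combination -h))

omit [NeZero k] in
lemma quad_subset_of_mem_stab {T : Finset (ZMod k)} {d x : ZMod k}
    (hd : d ∈ stab k T) (hx : x ∈ T) :
    ({x, x + d, x + d + d, x + d + d + d} : Finset (ZMod k)) ⊆ T := by
  have h1 := add_mem_of_mem_stab hd hx
  have h2 := add_mem_of_mem_stab hd h1
  have h3 := add_mem_of_mem_stab hd h2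
  intro t ht
  simp only [Finset.mem_insert, Finset.mem_singleton] at ht
  rcases ht with rfl | rfl | rfl | rfl <;> assumption

/-- If the stabilizer has 4 elements then it contains `q = k/4`. -/
lemma q_mem_stab_of_card_four {q : ℕ} (hq : 2 ≤ q) (hk4 : k = 4 * q)
    {T : Finset (ZMod k)} (h4 : Nat.card (stab k T) = 4) :
    (q : ZMod k) ∈ stab k T := by
  classical
  set Sf : Finset (ZMod k) :=
    Finset.univ.filter (fun d : ZMod k => T.image (· + d) = T) with hSf
  have hcard : Sf.card = 4 := by rw [← natCard_stab_eq, h4]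
  set V4 : Finset (ZMod k) :=
    {((0 : ℕ) : ZMod k), ((q : ℕ) : ZMod k), ((2 * q : ℕ) : ZMod k),
      ((3 * q : ℕ) : ZMod k)} with hV4
  have hsub : Sf ⊆ V4 := by
    intro d hd
    have hdstab : d ∈ stab k T := by
      rw [mem_stab]
      simpa [hSf] using hd
    have h4d : (4 : ℕ) • d = 0 := by rw [← h4]; exact card_smul_stab_eq_zero hdstab
    have := val_four_smul_zero (by omega) hk4 h4d
    have hcast := cast_val_eq d
    rw [hV4]
    simp only [Finset.mem_insert, Finset.mem_singleton]
    rcases this with h | h | h | h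
    · left; rw [← hcast, h]
    · right; left; rw [← hcast, h]
    · right; right; left; rw [← hcast, h]
    · right; right; right; rw [← hcast, h]
  have hV4card : V4.card = 4 := by
    refine card_quad ?_ ?_ ?_ ?_ ?_ ?_ <;>
      (intro h; have := natCast_inj (k := k) (by omega) (by omega) h; omega)
  have heq : Sf = V4 := Finset.eq_of_subset_of_card_le hsub (by omega)
  have : ((q : ℕ) : ZMod k) ∈ V4 := by
    rw [hV4]; simp only [Finset.mem_insert, Finset.mem_singleton]; tauto
  rw [← heq] at this
  rw [mem_stab]
  simpa [hSf] using this

/-- If the stabilizer has 2 elements then it contains `2q = k/2`. -/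
lemma half_mem_stab_of_card_two {q : ℕ} (hq : 2 ≤ q) (hk4 : k = 4 * q)
    {T : Finset (ZMod k)} (h2 : Nat.card (stab k T) = 2) :
    ((2 * q : ℕ) : ZMod k) ∈ stab k T := by
  classical
  set Sf : Finset (ZMod k) :=
    Finset.univ.filter (fun d : ZMod k => T.image (· + d) = T) with hSf
  have hcard : Sf.card = 2 := by rw [← natCard_stab_eq, h2]
  set V2 : Finset (ZMod k) := {((0 : ℕ) : ZMod k), ((2 * q : ℕ) : ZMod k)} with hV2
  have hsub : Sf ⊆ V2 := by
    intro d hd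
    have hdstab : d ∈ stab k T := by
      rw [mem_stab]
      simpa [hSf] using hd
    have h2d : (2 : ℕ) • d = 0 := by rw [← h2]; exact card_smul_stab_eq_zero hdstab
    have := val_two_smul_zero (by omega) hk4 h2d
    have hcast := cast_val_eq d
    rw [hV2]
    simp only [Finset.mem_insert, Finset.mem_singleton]
    rcases this with h | h
    · left; rw [← hcast, h]
    · right; rw [← hcast, h]
  have hV2card : V2.card = 2 := by
    rw [hV2, Finset.card_insert_of_notMem, Finset.card_singleton]
    simp only [Finset.mem_singleton]
    intro h
    have := natCast_inj (k := k) (by omega) (by omega) h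
    omega
  have heq : Sf = V2 := Finset.eq_of_subset_of_card_le hsub (by omega)
  have : ((2 * q : ℕ) : ZMod k) ∈ V2 := by
    rw [hV2]; simp only [Finset.mem_insert, Finset.mem_singleton]; tauto
  rw [← heq] at this
  rw [mem_stab]
  simpa [hSf] using this

/-- `q` stabilizes the base set of the class `[q,q,q]`. -/
lemma q_mem_stab_base {q : ℕ} (hq : 2 ≤ q) (hk4 : k = 4 * q) :
    (q : ZMod k) ∈ stab k
      ({0, (q : ZMod k), (q : ZMod k) + (q : ZMod k),
        (q : ZMod k) + (q : ZMod k) + (q : ZMod k)} : Finset (ZMod k)) := by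
  rw [mem_stab, image_base]
  have h4 : (q : ZMod k) + (q : ZMod k) + (q : ZMod k) + (q : ZMod k) = 0 := by
    have : ((4 * q : ℕ) : ZMod k) = 0 := by rw [← hk4]; exact ZMod.natCast_self k
    rw [← this]; push_cast; ring
  rw [h4]
  ext t
  simp only [Finset.mem_insert, Finset.mem_singleton]
  tauto

/-- `2q` stabilizes the base set of the class `[a,b,a]` when `a + b = 2q`. -/
lemma half_mem_stab_base {q a b : ℕ} (hq : 2 ≤ q) (hk4 : k = 4 * q) (hab : a + b = 2 * q) :
    ((2 * q : ℕ) : ZMod k) ∈ stab k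
      ({0, (a : ZMod k), (a : ZMod k) + (b : ZMod k),
        (a : ZMod k) + (b : ZMod k) + (a : ZMod k)} : Finset (ZMod k)) := by
  rw [mem_stab, image_base]
  have hab2 : (a : ZMod k) + (b : ZMod k) = ((2 * q : ℕ) : ZMod k) := by
    rw [← hab]; push_cast; ring
  have h4 : ((2 * q : ℕ) : ZMod k) + ((2 * q : ℕ) : ZMod k) = 0 := by
    have : ((4 * q : ℕ) : ZMod k) = 0 := by rw [← hk4]; exact ZMod.natCast_self k
    rw [← this]; push_cast; ring
  rw [show ((2 * q : ℕ) : ZMod k) + (a : ZMod k) + (b : ZMod k) = 0 by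
        linear_combination hab2 + h4, zero_add,
      show (a : ZMod k) + (b : ZMod k) + (a : ZMod k)
        = ((2 * q : ℕ) : ZMod k) + (a : ZMod k) by linear_combination hab2,
      show (a : ZMod k) + (b : ZMod k) = ((2 * q : ℕ) : ZMod k) from hab2]
  ext t
  simp only [Finset.mem_insert, Finset.mem_singleton]
  tauto

lemma cast_add_eq {m n : ℕ} : (m : ZMod k) + (n : ZMod k) = ((m + n : ℕ) : ZMod k) := by
  push_cast; ring

lemma partA {q : ℕ} (hq : 2 ≤ q) (hk4 : k = 4 * q) :
    {O | O ∈ transOrbits4 k ∧ O.ncard = q} = {transClass k q q q} := by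
  classical
  have hA : (q : ZMod k) ≠ 0 := cast_ne_zero_of (by omega) (by omega)
  have hB : (q : ZMod k) + (q : ZMod k) ≠ 0 := by
    rw [cast_add_eq]; exact cast_ne_zero_of (by omega) (by omega)
  have hC : (q : ZMod k) + (q : ZMod k) + (q : ZMod k) ≠ 0 := by
    rw [cast_add_eq, cast_add_eq]; exact cast_ne_zero_of (by omega) (by omega)
  ext O
  simp only [Set.mem_setOf_eq, Set.mem_singleton_iff]
  constructor
  · rintro ⟨⟨T, hT4, rfl⟩, hnc⟩
    have hmul := orbit_ncard_mul_stab T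
    rw [hnc] at hmul
    have hstab4 : Nat.card (stab k T) = 4 :=
      Nat.eq_of_mul_eq_mul_left (show 0 < q by omega) (hmul.trans (by omega))
    have hQmem := q_mem_stab_of_card_four hq hk4 hstab4
    obtain ⟨x, hx⟩ : ∃ x, x ∈ T := Finset.card_pos.mp (by omega) |>.imp fun _ h => h
    have hsub := quad_subset_of_mem_stab hQmem hx
    have hqc := card_quad_translate x hA hB hC hA hB hA
    have heq := Finset.eq_of_subset_of_card_le hsub (by rw [hT4, hqc])
    have hclass : T ∈ transClass k q q q := ⟨x, heq.symm⟩
    rw [transClass_eq_orbit] at hclass ⊢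
    exact transOrbit_eq_of_mem hclass
  · rintro rfl
    set base : Finset (ZMod k) :=
      {0, (q : ZMod k), (q : ZMod k) + (q : ZMod k),
        (q : ZMod k) + (q : ZMod k) + (q : ZMod k)} with hbase
    have hbcard : base.card = 4 := by
      rw [hbase, show ({0, (q : ZMod k), (q : ZMod k) + (q : ZMod k),
          (q : ZMod k) + (q : ZMod k) + (q : ZMod k)} : Finset (ZMod k))
        = {(0 : ZMod k), 0 + (q : ZMod k), 0 + (q : ZMod k) + (q : ZMod k),
          0 + (q : ZMod k) + (q : ZMod k) + (q : ZMod k)} by simp only [zero_add]]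
      exact card_quad_translate 0 hA hB hC hA hB hA
    have hQs : (q : ZMod k) ∈ stab k base := q_mem_stab_base hq hk4
    have h0s : (0 : ZMod k) ∈ stab k base := (stab k base).zero_mem
    have hQQs : (q : ZMod k) + (q : ZMod k) ∈ stab k base := (stab k base).add_mem hQs hQs
    have hQQQs : (q : ZMod k) + (q : ZMod k) + (q : ZMod k) ∈ stab k base :=
      (stab k base).add_mem hQQs hQs
    have h0mem : (0 : ZMod k) ∈ base := by rw [hbase]; simp
    have hle : Nat.card (stab k base) ≤ 4 := by
      have := natCard_stab_le h0mem
      omega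
    have hge : 4 ≤ Nat.card (stab k base) := by
      rw [natCard_stab_eq]
      have hsub2 : base ⊆ Finset.univ.filter
          (fun d : ZMod k => base.image (· + d) = base) := by
        intro t ht
        rw [hbase] at ht
        simp only [Finset.mem_insert, Finset.mem_singleton] at ht
        rcases ht with rfl | rfl | rfl | rfl <;>
          (rw [Finset.mem_filter]; exact ⟨Finset.mem_univ _, by assumption⟩)
      have := Finset.card_le_card hsub2
      omega
    have h4 : Nat.card (stab k base) = 4 := le_antisymm hle hge
    rw [transClass_eq_orbit]
    refine ⟨⟨base, hbcard, rfl⟩, ?_⟩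
    rw [orbit_ncard_of_stab h4 (by norm_num)]
    omega

lemma cast_4q_eq_zero {q : ℕ} (hk4 : k = 4 * q) : ((4 * q : ℕ) : ZMod k) = 0 := by
  rw [← hk4]; exact ZMod.natCast_self k

lemma half_add_half {q : ℕ} (hk4 : k = 4 * q) :
    ((2 * q : ℕ) : ZMod k) + ((2 * q : ℕ) : ZMod k) = 0 := by
  rw [cast_add_eq, show 2 * q + 2 * q = 4 * q by ring]
  exact cast_4q_eq_zero hk4

lemma q_add_q {q : ℕ} : (q : ZMod k) + (q : ZMod k) = ((2 * q : ℕ) : ZMod k) := by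
  rw [cast_add_eq, show q + q = 2 * q by ring]

/-- `q` stabilizes any set of the form `{x, x+q, x+2q, x+q+2q}`. -/
lemma q_stab_special {q : ℕ} (hq : 2 ≤ q) (hk4 : k = 4 * q) (x : ZMod k) :
    (q : ZMod k) ∈ stab k
      ({x, x + (q : ZMod k), x + ((2 * q : ℕ) : ZMod k),
        x + (q : ZMod k) + ((2 * q : ℕ) : ZMod k)} : Finset (ZMod k)) := by
  have hQQ := q_add_q (k := k) (q := q)
  have hHH := half_add_half (k := k) hk4
  rw [mem_stab]
  simp only [Finset.image_insert, Finset.image_singleton]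
  rw [show x + (q : ZMod k) + (q : ZMod k) = x + ((2 * q : ℕ) : ZMod k) by
        linear_combination hQQ,
      show x + ((2 * q : ℕ) : ZMod k) + (q : ZMod k)
        = x + (q : ZMod k) + ((2 * q : ℕ) : ZMod k) by ring,
      show x + (q : ZMod k) + ((2 * q : ℕ) : ZMod k) + (q : ZMod k) = x by
        linear_combination hQQ + hHH]
  ext t
  simp only [Finset.mem_insert, Finset.mem_singleton]
  tauto

/-- Any set of the special shape `{x, x+u, x+2q, x+u+2q}` with `0 < u < 2q`, `u ≠ q`
belongs to a class `[a,b,a]`. -/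
lemma mem_classB {q u : ℕ} (hq : 2 ≤ q) (hk4 : k = 4 * q) (hu0 : 0 < u)
    (hu2q : u < 2 * q) (hune : u ≠ q) (x : ZMod k) {T : Finset (ZMod k)}
    (hT : T = {x, x + (u : ZMod k), x + ((2 * q : ℕ) : ZMod k),
      x + (u : ZMod k) + ((2 * q : ℕ) : ZMod k)}) :
    ∃ a b : ℕ, 1 ≤ a ∧ a < b ∧ a + b = 2 * q ∧ T ∈ transClass k a b a := by
  have hHH := half_add_half (k := k) hk4
  rcases lt_or_gt_of_ne hune with hlt | hgt
  · -- u < q : take a = u, b = 2q - u, i = x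
    refine ⟨u, 2 * q - u, by omega, by omega, by omega, x, ?_⟩
    have h1 : (u : ZMod k) + ((2 * q - u : ℕ) : ZMod k) = ((2 * q : ℕ) : ZMod k) := by
      rw [cast_add_eq]; congr 1; omega
    rw [hT,
      show x + (u : ZMod k) + ((2 * q - u : ℕ) : ZMod k) = x + ((2 * q : ℕ) : ZMod k) by
        linear_combination h1,
      show x + ((2 * q : ℕ) : ZMod k) + (u : ZMod k)
        = x + (u : ZMod k) + ((2 * q : ℕ) : ZMod k) by ring]
  · -- u > q : take a = 2q - u, b = u, i = x + u
    refine ⟨2 * q - u, u, by omega, by omega, by omega, x + (u : ZMod k), ?_⟩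
    have h1 : ((2 * q - u : ℕ) : ZMod k) + (u : ZMod k) = ((2 * q : ℕ) : ZMod k) := by
      rw [cast_add_eq]; congr 1; omega
    rw [hT,
      show x + (u : ZMod k) + ((2 * q - u : ℕ) : ZMod k) + (u : ZMod k)
          + ((2 * q - u : ℕ) : ZMod k) = x by linear_combination 2 * h1 + hHH,
      show x + (u : ZMod k) + ((2 * q - u : ℕ) : ZMod k) + (u : ZMod k)
          = x + (u : ZMod k) + ((2 * q : ℕ) : ZMod k) by linear_combination h1,
      show x + (u : ZMod k) + ((2 * q - u : ℕ) : ZMod k) = x + ((2 * q : ℕ) : ZMod k) by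
        linear_combination h1]
    ext t
    simp only [Finset.mem_insert, Finset.mem_singleton]
    tauto

lemma classB_of {q : ℕ} (hq : 2 ≤ q) (hk4 : k = 4 * q) {T : Finset (ZMod k)}
    (hT4 : T.card = 4) (h2 : Nat.card (stab k T) = 2) :
    ∃ a b : ℕ, 1 ≤ a ∧ a < b ∧ a + b = 2 * q ∧ T ∈ transClass k a b a := by
  classical
  set H : ZMod k := ((2 * q : ℕ) : ZMod k) with hHdef
  have hHH : H + H = 0 := half_add_half hk4
  have hH0 : H ≠ 0 := cast_ne_zero_of (by omega) (by omega)
  have hHmem : H ∈ stab k T := half_mem_stab_of_card_two hq hk4 h2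
  have hQnot : (q : ZMod k) ∉ stab k T := by
    intro hQ
    have h2d : (2 : ℕ) • ((q : ℕ) : ZMod k) = 0 := by
      rw [← h2]; exact card_smul_stab_eq_zero hQ
    have := val_two_smul_zero (by omega) hk4 h2d
    rw [ZMod.val_cast_of_lt (by omega)] at this
    omega
  obtain ⟨x, hx⟩ : ∃ x, x ∈ T := Finset.card_pos.mp (by omega) |>.imp fun _ h => h
  have hxH : x + H ∈ T := add_mem_of_mem_stab hHmem hx
  have hxne : x ≠ x + H := fun h => hH0 (by linear_combination -h)
  have hpair : ({x, x + H} : Finset (ZMod k)) ⊆ T := by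
    intro t ht
    simp only [Finset.mem_insert, Finset.mem_singleton] at ht
    rcases ht with rfl | rfl <;> assumption
  have hpcard : ({x, x + H} : Finset (ZMod k)).card = 2 := by
    rw [Finset.card_insert_of_notMem (by simpa using hxne), Finset.card_singleton]
  have hsd : (T \ ({x, x + H} : Finset (ZMod k))).card = 2 := by
    rw [Finset.card_sdiff_of_subset hpair, hT4, hpcard]
  obtain ⟨y, hy⟩ : ∃ y, y ∈ T \ ({x, x + H} : Finset (ZMod k)) :=
    Finset.card_pos.mp (by omega) |>.imp fun _ h => h
  rw [Finset.mem_sdiff] at hy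
  obtain ⟨hyT, hyn⟩ := hy
  simp only [Finset.mem_insert, Finset.mem_singleton] at hyn
  push_neg at hyn
  obtain ⟨hyx, hyxH⟩ := hyn
  have hyH : y + H ∈ T := add_mem_of_mem_stab hHmem hyT
  -- T = {x, x+H, y, y+H}
  have hyHx : y + H ≠ x := fun h => hyxH (by linear_combination h - hHH)
  have hyHxH : y + H ≠ x + H := fun h => hyx (add_right_cancel h)
  have hyyH : y ≠ y + H := fun h => hH0 (by linear_combination -h)
  have hqcard : ({x, x + H, y, y + H} : Finset (ZMod k)).card = 4 :=
    card_quad hxne hyx.symm hyHx.symm hyxH.symm hyHxH.symm hyyH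
  have hqsub : ({x, x + H, y, y + H} : Finset (ZMod k)) ⊆ T := by
    intro t ht
    simp only [Finset.mem_insert, Finset.mem_singleton] at ht
    rcases ht with rfl | rfl | rfl | rfl <;> assumption
  have hTeq : T = {x, x + H, y, y + H} :=
    (Finset.eq_of_subset_of_card_le hqsub (by omega)).symm
  -- analyze v = (y - x).val
  set e : ZMod k := y - x with hedef
  have he : y = x + e := by rw [hedef]; ring
  have hev : e = ((e.val : ℕ) : ZMod k) := (cast_val_eq e).symm
  set v : ℕ := e.val with hvdef
  have hvlt : v < 4 * q := by rw [hvdef, ← hk4]; exact ZMod.val_lt e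
  have hv0 : v ≠ 0 := by
    intro h
    apply hyx
    rw [he, hev, h, Nat.cast_zero, add_zero]
  have hv2q : v ≠ 2 * q := by
    intro h
    apply hyxH
    rw [he, hev, h]
  -- v = q or v = 3q would give stabilizer element q
  have hvq : v ≠ q := by
    intro h
    apply hQnot
    have hTeq2 : T = {x, x + (q : ZMod k), x + H, x + (q : ZMod k) + H} := by
      rw [hTeq, he, hev, h]
      ext t
      simp only [Finset.mem_insert, Finset.mem_singleton]
      itauto
    rw [hTeq2]
    exact q_stab_special hq hk4 x
  have hv3q : v ≠ 3 * q := by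
    intro h
    apply hQnot
    have h3 : (q : ZMod k) + H = ((3 * q : ℕ) : ZMod k) := by
      rw [hHdef, cast_add_eq, show q + 2 * q = 3 * q by ring]
    have h5 : ((3 * q : ℕ) : ZMod k) + H = (q : ZMod k) := by
      rw [hHdef, cast_add_eq, show 3 * q + 2 * q = q + 4 * q by ring, ← cast_add_eq,
        cast_4q_eq_zero hk4, add_zero]
    have hTeq2 : T = {x, x + (q : ZMod k), x + H, x + (q : ZMod k) + H} := by
      rw [hTeq, he, hev, h,
        show x + ((3 * q : ℕ) : ZMod k) = x + (q : ZMod k) + H by linear_combination -h3,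
        show x + (q : ZMod k) + H + H = x + (q : ZMod k) by linear_combination hHH]
      ext t
      simp only [Finset.mem_insert, Finset.mem_singleton]
      itauto
    rw [hTeq2]
    exact q_stab_special hq hk4 x
  rcases lt_or_gt_of_ne hv2q with hcase | hcase
  · -- v < 2q
    apply mem_classB (u := v) hq hk4 (by omega) hcase hvq x
    rw [hTeq, he, hev, hHdef]
    ext t
    simp only [Finset.mem_insert, Finset.mem_singleton]
    itauto
  · -- v > 2q : use u = v - 2q
    have hcast : ((v - 2 * q : ℕ) : ZMod k) = ((v : ℕ) : ZMod k) - H := by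
      rw [hHdef, Nat.cast_sub (by omega)]
    have he' : y = x + ((v : ℕ) : ZMod k) := by rw [he, hev, hvdef]
    apply mem_classB (u := v - 2 * q) hq hk4 (by omega) (by omega) (by omega) x
    rw [show x + ((v - 2 * q : ℕ) : ZMod k) + ((2 * q : ℕ) : ZMod k) = y by
        rw [hcast, ← hHdef]; linear_combination -he',
      show x + ((v - 2 * q : ℕ) : ZMod k) = y + ((2 * q : ℕ) : ZMod k) by
        rw [hcast, ← hHdef]; linear_combination -he' - hHH,
      hTeq, hHdef]
    ext t
    simp only [Finset.mem_insert, Finset.mem_singleton]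
    itauto

lemma partB {q : ℕ} (hq : 2 ≤ q) (hk4 : k = 4 * q) :
    {O | O ∈ transOrbits4 k ∧ O.ncard = 2 * q}
      = {O : Set (Finset (ZMod k)) |
          ∃ a b : ℕ, 1 ≤ a ∧ a < b ∧ a + b = 2 * q ∧ O = transClass k a b a} := by
  classical
  ext O
  simp only [Set.mem_setOf_eq]
  constructor
  · rintro ⟨⟨T, hT4, rfl⟩, hnc⟩
    have hmul := orbit_ncard_mul_stab T
    rw [hnc] at hmul
    have hstab2 : Nat.card (stab k T) = 2 :=
      Nat.eq_of_mul_eq_mul_left (show 0 < 2 * q by omega) (hmul.trans (by omega))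
    obtain ⟨a, b, ha, hab, habq, hmem⟩ := classB_of hq hk4 hT4 hstab2
    refine ⟨a, b, ha, hab, habq, ?_⟩
    rw [transClass_eq_orbit] at hmem ⊢
    exact transOrbit_eq_of_mem hmem
  · rintro ⟨a, b, ha, hab, habq, rfl⟩
    have haq : a < q := by omega
    have hbq : b ≤ 2 * q - 1 := by omega
    have hA : (a : ZMod k) ≠ 0 := cast_ne_zero_of (by omega) (by omega)
    have hAB : (a : ZMod k) + (b : ZMod k) = ((2 * q : ℕ) : ZMod k) := by
      rw [cast_add_eq, habq]
    have hBA : (b : ZMod k) + (a : ZMod k) = ((2 * q : ℕ) : ZMod k) := by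
      rw [cast_add_eq, show b + a = 2 * q by omega]
    have hABne : (a : ZMod k) + (b : ZMod k) ≠ 0 := by
      rw [hAB]; exact cast_ne_zero_of (by omega) (by omega)
    have hBAne : (b : ZMod k) + (a : ZMod k) ≠ 0 := by
      rw [hBA]; exact cast_ne_zero_of (by omega) (by omega)
    have hB : (b : ZMod k) ≠ 0 := cast_ne_zero_of (by omega) (by omega)
    have hABA : (a : ZMod k) + (b : ZMod k) + (a : ZMod k) = ((2 * q + a : ℕ) : ZMod k) := by
      rw [hAB, cast_add_eq]
    have hABAne : (a : ZMod k) + (b : ZMod k) + (a : ZMod k) ≠ 0 := by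
      rw [hABA]; exact cast_ne_zero_of (by omega) (by omega)
    set base : Finset (ZMod k) :=
      {0, (a : ZMod k), (a : ZMod k) + (b : ZMod k),
        (a : ZMod k) + (b : ZMod k) + (a : ZMod k)} with hbase
    have hbcard : base.card = 4 := by
      rw [hbase, show ({0, (a : ZMod k), (a : ZMod k) + (b : ZMod k),
          (a : ZMod k) + (b : ZMod k) + (a : ZMod k)} : Finset (ZMod k))
        = {(0 : ZMod k), 0 + (a : ZMod k), 0 + (a : ZMod k) + (b : ZMod k),
          0 + (a : ZMod k) + (b : ZMod k) + (a : ZMod k)} by simp only [zero_add]]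
      exact card_quad_translate 0 hA hABne hABAne hB hBAne hA
    have hHs : ((2 * q : ℕ) : ZMod k) ∈ stab k base := half_mem_stab_base hq hk4 habq
    have h0mem : (0 : ZMod k) ∈ base := by rw [hbase]; simp
    have hle : Nat.card (stab k base) ≤ 4 := by
      have := natCard_stab_le h0mem
      omega
    have hne3 := natCard_stab_ne_three hbcard
    have hH0 : ((2 * q : ℕ) : ZMod k) ≠ 0 := cast_ne_zero_of (by omega) (by omega)
    have hge2 : 2 ≤ Nat.card (stab k base) := by
      rw [natCard_stab_eq]
      have hsub2 : ({0, ((2 * q : ℕ) : ZMod k)} : Finset (ZMod k)) ⊆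
          Finset.univ.filter (fun d : ZMod k => base.image (· + d) = base) := by
        intro t ht
        simp only [Finset.mem_insert, Finset.mem_singleton] at ht
        rcases ht with rfl | rfl
        · exact Finset.mem_filter.mpr ⟨Finset.mem_univ _, (stab k base).zero_mem⟩
        · exact Finset.mem_filter.mpr ⟨Finset.mem_univ _, hHs⟩
      have hpc : ({0, ((2 * q : ℕ) : ZMod k)} : Finset (ZMod k)).card = 2 := by
        rw [Finset.card_insert_of_notMem (by
            simp only [Finset.mem_singleton]
            exact fun h => hH0 h.symm),
          Finset.card_singleton]
      have := Finset.card_le_card hsub2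
      omega
    have hne4 : Nat.card (stab k base) ≠ 4 := by
      intro h4
      have hQs := q_mem_stab_of_card_four hq hk4 h4
      have hmem : (0 : ZMod k) + (q : ZMod k) ∈ base := add_mem_of_mem_stab hQs h0mem
      rw [zero_add, hbase] at hmem
      simp only [Finset.mem_insert, Finset.mem_singleton] at hmem
      rcases hmem with h | h | h | h
      · exact (cast_ne_zero_of (by omega) (by omega) : (q : ZMod k) ≠ 0) h
      · have := natCast_inj (k := k) (by omega) (by omega) h; omega
      · rw [hAB] at h
        have := natCast_inj (k := k) (by omega) (by omega) h; omega
      · rw [hABA] at h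
        have := natCast_inj (k := k) (by omega) (by omega) h; omega
    have h2c : Nat.card (stab k base) = 2 := by omega
    refine ⟨⟨base, hbcard, transClass_eq_orbit a b a⟩, ?_⟩
    rw [transClass_eq_orbit]
    exact (orbit_ncard_of_stab h2c (by norm_num)).trans (show k / 2 = 2 * q by omega)

lemma class_inj {q a a' : ℕ} (hq : 2 ≤ q) (hk4 : k = 4 * q) (ha : 1 ≤ a) (haq : a < q)
    (ha' : 1 ≤ a') (ha'q : a' < q)
    (h : transClass k a (2 * q - a) a = transClass k a' (2 * q - a') a') : a = a' := by
  have hmem : ({(0 : ZMod k), 0 + (a : ZMod k), 0 + (a : ZMod k) + ((2 * q - a : ℕ) : ZMod k),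
      0 + (a : ZMod k) + ((2 * q - a : ℕ) : ZMod k) + (a : ZMod k)} : Finset (ZMod k))
      ∈ transClass k a' (2 * q - a') a' := by
    rw [← h]
    exact ⟨0, rfl⟩
  obtain ⟨i, hi⟩ := hmem
  set L : Finset (ZMod k) := {((0 : ℕ) : ZMod k), ((a : ℕ) : ZMod k),
    ((2 * q : ℕ) : ZMod k), ((2 * q + a : ℕ) : ZMod k)} with hL
  have hLeq : ({(0 : ZMod k), 0 + (a : ZMod k), 0 + (a : ZMod k) + ((2 * q - a : ℕ) : ZMod k),
      0 + (a : ZMod k) + ((2 * q - a : ℕ) : ZMod k) + (a : ZMod k)} : Finset (ZMod k)) = L := by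
    rw [hL]
    simp only [zero_add]
    rw [show ((a : ℕ) : ZMod k) + ((2 * q - a : ℕ) : ZMod k) = ((2 * q : ℕ) : ZMod k) by
        rw [cast_add_eq]; congr 1; omega,
      show ((2 * q : ℕ) : ZMod k) + ((a : ℕ) : ZMod k) = ((2 * q + a : ℕ) : ZMod k) from
        cast_add_eq,
      show (0 : ZMod k) = ((0 : ℕ) : ZMod k) by norm_num]
  rw [hLeq] at hi
  have h1 : i ∈ L := by rw [hi]; simp
  have h2 : i + (a' : ZMod k) ∈ L := by
    rw [hi]
    simp only [Finset.mem_insert, Finset.mem_singleton]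
    tauto
  have key : ∀ t : ℕ, t < 4 * q → ((t : ℕ) : ZMod k) ∈ L →
      t = 0 ∨ t = a ∨ t = 2 * q ∨ t = 2 * q + a := by
    intro t ht htm
    rw [hL] at htm
    simp only [Finset.mem_insert, Finset.mem_singleton] at htm
    rcases htm with h' | h' | h' | h'
    · exact Or.inl (natCast_inj (by omega) (by omega) h')
    · exact Or.inr (Or.inl (natCast_inj (by omega) (by omega) h'))
    · exact Or.inr (Or.inr (Or.inl (natCast_inj (by omega) (by omega) h')))
    · exact Or.inr (Or.inr (Or.inr (natCast_inj (by omega) (by omega) h')))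
  rw [hL] at h1
  simp only [Finset.mem_insert, Finset.mem_singleton] at h1
  rcases h1 with h' | h' | h' | h' <;>
    (rw [h', cast_add_eq] at h2; have := key _ (by omega) h2; omega)

lemma partC {q : ℕ} (hq : 2 ≤ q) (hk4 : k = 4 * q) :
    {O : Set (Finset (ZMod k)) |
        ∃ a b : ℕ, 1 ≤ a ∧ a < b ∧ a + b = 2 * q ∧ O = transClass k a b a}.ncard
      = q - 1 := by
  have hset : {O : Set (Finset (ZMod k)) |
        ∃ a b : ℕ, 1 ≤ a ∧ a < b ∧ a + b = 2 * q ∧ O = transClass k a b a}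
      = (fun a : ℕ => transClass k a (2 * q - a) a) '' (Set.Ico 1 q) := by
    ext O
    simp only [Set.mem_setOf_eq, Set.mem_image, Set.mem_Ico]
    constructor
    · rintro ⟨a, b, ha, hab, habq, rfl⟩
      exact ⟨a, ⟨ha, by omega⟩, by rw [show 2 * q - a = b by omega]⟩
    · rintro ⟨a, ⟨h1', h2'⟩, rfl⟩
      exact ⟨a, 2 * q - a, h1', by omega, by omega, rfl⟩
  rw [hset, Set.ncard_image_of_injOn, ← Finset.coe_Ico, Set.ncard_coe_finset, Nat.card_Ico]
  intro a ha a' ha' hcl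
  rw [Set.mem_Ico] at ha ha'
  exact class_inj hq hk4 ha.1 ha.2 ha'.1 ha'.2 hcl

lemma partD {q : ℕ} (hq : 2 ≤ q) (hk4 : k = 4 * q) :
    ∀ O ∈ transOrbits4 k, O.ncard ≠ q → O.ncard ≠ 2 * q → O.ncard = k := by
  rintro O ⟨T, hT4, rfl⟩ hne1 hne2
  obtain ⟨x, hx⟩ : ∃ x, x ∈ T := Finset.card_pos.mp (by omega) |>.imp fun _ h => h
  have hle : Nat.card (stab k T) ≤ 4 := by
    have := natCard_stab_le hx
    omega
  have hne3 := natCard_stab_ne_three hT4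
  have hpos : 0 < Nat.card (stab k T) := Nat.card_pos
  have h124 : Nat.card (stab k T) = 1 ∨ Nat.card (stab k T) = 2 ∨
      Nat.card (stab k T) = 4 := by omega
  rcases h124 with hc | hc | hc
  · exact (orbit_ncard_of_stab hc (by norm_num)).trans (Nat.div_one k)
  · exact absurd ((orbit_ncard_of_stab hc (by norm_num)).trans
      (show k / 2 = 2 * q by omega)) hne2
  · exact absurd ((orbit_ncard_of_stab hc (by norm_num)).trans
      (show k / 4 = q by omega)) hne1

end TO4


/-- For `k ≥ 8` with `4 ∣ k`: among the translation orbits of 4-element subsets of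
`ZMod k`, there is exactly one orbit of size `k/4`, namely the class `[k/4,k/4,k/4]`;
the orbits of size `k/2` are exactly the classes `[a,b,a]` with `1 ≤ a < b` and
`a + b = k/2`, and there are exactly `k/4 - 1` of them; every other orbit has size `k`. -/
theorem transOrbits4_zero_mod_four (k : ℕ) (hk : 8 ≤ k) (hmod : k % 4 = 0) :
    { O ∈ transOrbits4 k | O.ncard = k / 4 }
      = {transClass k (k / 4) (k / 4) (k / 4)} ∧
    { O ∈ transOrbits4 k | O.ncard = k / 2 }
      = { O | ∃ a b : ℕ, 1 ≤ a ∧ a < b ∧ a + b = k / 2 ∧ O = transClass k a b a } ∧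
    { O ∈ transOrbits4 k | O.ncard = k / 2 }.ncard = k / 4 - 1 ∧
    (∀ O ∈ transOrbits4 k, O.ncard ≠ k / 4 → O.ncard ≠ k / 2 → O.ncard = k) := by
  haveI : NeZero k := ⟨by omega⟩
  have hq : 2 ≤ k / 4 := by omega
  have hk4 : k = 4 * (k / 4) := by omega
  have h2q : k / 2 = 2 * (k / 4) := by omega
  refine ⟨?_, ?_, ?_, ?_⟩
  · exact TO4.partA hq hk4
  · rw [h2q]
    exact TO4.partB hq hk4
  · rw [h2q, TO4.partB hq hk4]
    exact TO4.partC hq hk4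
  · intro O hO h1 h2
    rw [h2q] at h2
    exact TO4.partD hq hk4 O hO h1 h2
end

section
/- Let G be a finite group acting on a finite type X with |X| = g, let k ≥ 4, and let u, v : ZMod k → X. Suppose that for every injective map r : Fin 4 → ZMod k and every non-constant tuple w : Fin 4 → X there exist j ∈ ZMod k, a vector s ∈ {u, v}, and a group element a ∈ G such that s(r i − j) = a • w i for all i ∈ Fin 4 (i.e., every 4-row subarray of the 2k-column circulant matrix built from u and v contains a representative of every G-orbit of non-constant 4-tuples from X). Then there exists a covering array 4-CA(2·k·|G| + g, k, g). -/
/-- A covering array of strength 4 with `n` columns, `k` rows, over an alphabet `X`: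
for every choice of 4 distinct rows and every 4-tuple of symbols, some column realizes
that tuple on those rows. -/
def IsCoveringArray4On (X : Type*) (n k : ℕ) (A : Fin k → Fin n → X) : Prop :=
  ∀ r : Fin 4 → Fin k, Function.Injective r →
    ∀ w : Fin 4 → X, ∃ c : Fin n, ∀ i : Fin 4, A (r i) c = w i

/-- If `u, v : ZMod k → X` are starter vectors, i.e. every 4-row subarray of the
`2k`-column circulant matrix built from `u` and `v` contains, for every `G`-orbit of
non-constant 4-tuples from `X`, a representative of that orbit, then there exists a
covering array `4-CA(2·k·|G| + g, k, g)` over the alphabet `X` (with `|X| = g`). -/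
theorem coveringArray_of_starter_vectors
    {G X : Type*} [Group G] [Fintype G] [Fintype X] [MulAction G X]
    (g k : ℕ) (hg : Fintype.card X = g) (hk : 4 ≤ k) (u v : ZMod k → X)
    (h : ∀ r : Fin 4 → ZMod k, Function.Injective r →
      ∀ w : Fin 4 → X, (∃ i j : Fin 4, w i ≠ w j) →
        ∃ j : ZMod k, ∃ s ∈ ({u, v} : Set (ZMod k → X)), ∃ a : G,
          ∀ i : Fin 4, s (r i - j) = a • w i) :
    ∃ A : Fin k → Fin (2 * k * Fintype.card G + g) → X,
      IsCoveringArray4On X (2 * k * Fintype.card G + g) k A := by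
  haveI : NeZero k := ⟨by omega⟩
  have hcard : Fintype.card ((Bool × ZMod k × G) ⊕ X) = 2 * k * Fintype.card G + g := by
    simp [Fintype.card_sum, Fintype.card_prod, ZMod.card, hg]; ring
  obtain ⟨e⟩ : Nonempty (Fin (2 * k * Fintype.card G + g) ≃ ((Bool × ZMod k × G) ⊕ X)) :=
    ⟨Fintype.equivOfCardEq (by simp [hcard])⟩
  refine ⟨fun i c => match e c with
    | Sum.inl (b, j, a) => a⁻¹ • (if b then u else v) ((i : ZMod k) - j)
    | Sum.inr x => x, ?_⟩
  intro r hr w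
  by_cases hw : ∃ i j : Fin 4, w i ≠ w j
  · have hr' : Function.Injective (fun i => ((r i : ℕ) : ZMod k)) := by
      intro i i' hii
      apply hr
      have := congrArg ZMod.val hii
      simp only [ZMod.val_natCast_of_lt (r i).isLt, ZMod.val_natCast_of_lt (r i').isLt] at this
      exact Fin.ext this
    obtain ⟨j, s, hs, a, ha⟩ := h (fun i => ((r i : ℕ) : ZMod k)) hr' w hw
    rcases hs with hs | hs
    · refine ⟨e.symm (Sum.inl (true, j, a)), fun i => ?_⟩
      simp only [Equiv.apply_symm_apply]
      simp only [if_true]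
      rw [← hs, ha i, inv_smul_smul]
    · refine ⟨e.symm (Sum.inl (false, j, a)), fun i => ?_⟩
      simp only [Equiv.apply_symm_apply]
      have hs' : s = v := hs
      simp only [Bool.false_eq_true, if_false]
      rw [← hs', ha i, inv_smul_smul]
  · push_neg at hw
    refine ⟨e.symm (Sum.inr (w 0)), fun i => ?_⟩
    simp [hw i 0]
end

section
/- Let q be a prime power, F a finite field with |F| = q, and g = q + 1. Let X = ℙ(F²) be the projective line over F (the projectivization of the 2-dimensional vector space Fin 2 → F), with the action of GL(2,F) induced by its linear action on F². Let k ≥ 4 and let u, v : ZMod k → X be such that for every injective map r : Fin 4 → ZMod k and every non-constant tuple w : Fin 4 → X there exist j ∈ ZMod k, a vector s ∈ {u, v}, and a ∈ GL(2,F) with s(r i − j) = a • w i for all i ∈ Fin 4. Then there exists a covering array 4-CA(2·k·g·(g−1)·(g−2) + g, k, g), i.e. of size 2k(q+1)q(q−1) + q + 1 on k rows over g symbols. -/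
/-- The action of an invertible matrix `a ∈ GL(2,F)` on the projective line `ℙ(F²)`,
induced by the linear action of `a` on `F² = Fin 2 → F`. -/
noncomputable def projAct {F : Type*} [Field F] (a : GL (Fin 2) F)
    (p : Projectivization F (Fin 2 → F)) : Projectivization F (Fin 2 → F) :=
  Projectivization.map (Matrix.toLin' (a : Matrix (Fin 2) (Fin 2) F))
    (by
      have hli : Function.LeftInverse
          (Matrix.toLin' ((a⁻¹ : GL (Fin 2) F) : Matrix (Fin 2) (Fin 2) F))
          (Matrix.toLin' (a : Matrix (Fin 2) (Fin 2) F)) := by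
        intro x
        have h1 : ((a⁻¹ : GL (Fin 2) F) : Matrix (Fin 2) (Fin 2) F)
            * (a : Matrix (Fin 2) (Fin 2) F) = 1 := a.inv_mul
        rw [Matrix.toLin'_apply, Matrix.toLin'_apply, Matrix.mulVec_mulVec, h1,
          Matrix.one_mulVec]
      exact hli.injective)
    p

lemma projMap_congr {K V W : Type*} [Field K] [AddCommGroup V] [Module K V]
    [AddCommGroup W] [Module K W] (f g : V →ₗ[K] W) (hf : Function.Injective f)
    (h : f = g) : Projectivization.map f hf = Projectivization.map g (h ▸ hf) := by
  subst h; rfl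

lemma projAct_mul {F : Type*} [Field F] (a b : GL (Fin 2) F) :
    projAct (a * b) = fun p => projAct a (projAct b p) := by
  unfold projAct
  rw [projMap_congr _ ((Matrix.toLin' (a : Matrix (Fin 2) (Fin 2) F)).comp
      (Matrix.toLin' (b : Matrix (Fin 2) (Fin 2) F))) _
      (by rw [Units.val_mul, Matrix.toLin'_mul]),
    Projectivization.map_comp]
  rfl

lemma projAct_one {F : Type*} [Field F] : projAct (1 : GL (Fin 2) F) = id := by
  unfold projAct
  rw [projMap_congr _ (LinearMap.id) _ (by rw [Units.val_one, Matrix.toLin'_one]),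
    Projectivization.map_id]

/-- `projAct` as a monoid hom to permutations. -/
noncomputable def projPerm (F : Type*) [Field F] :
    GL (Fin 2) F →* Equiv.Perm (Projectivization F (Fin 2 → F)) where
  toFun a :=
    { toFun := projAct a
      invFun := projAct a⁻¹
      left_inv := fun p => by
        rw [show projAct a⁻¹ (projAct a p) = projAct (a⁻¹ * a) p by rw [projAct_mul],
          inv_mul_cancel, projAct_one]; rfl
      right_inv := fun p => by
        rw [show projAct a (projAct a⁻¹ p) = projAct (a * a⁻¹) p by rw [projAct_mul],
          mul_inv_cancel, projAct_one]; rfl }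
  map_one' := by ext p; simp [projAct_one]
  map_mul' a b := by ext p; simp [projAct_mul]

@[simp] lemma projPerm_apply {F : Type*} [Field F] (a : GL (Fin 2) F)
    (p : Projectivization F (Fin 2 → F)) : projPerm F a p = projAct a p := rfl

/-- an equivalence of projectivizations from a linear equivalence -/
noncomputable def projEquiv {K V W : Type*} [Field K] [AddCommGroup V] [Module K V]
    [AddCommGroup W] [Module K W] (e : V ≃ₗ[K] W) :
    Projectivization K V ≃ Projectivization K W where
  toFun := Projectivization.map e.toLinearMap e.injective
  invFun := Projectivization.map e.symm.toLinearMap e.symm.injective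
  left_inv p := by
    rw [← Function.comp_apply (f := Projectivization.map e.symm.toLinearMap e.symm.injective),
      ← Projectivization.map_comp,
      projMap_congr _ LinearMap.id _ (by ext x; simp), Projectivization.map_id, id_eq]
  right_inv p := by
    rw [← Function.comp_apply (f := Projectivization.map e.toLinearMap e.injective),
      ← Projectivization.map_comp,
      projMap_congr _ LinearMap.id _ (by ext x; simp), Projectivization.map_id, id_eq]

noncomputable def projLineEquiv (F : Type*) [Field F] [DecidableEq F] :
    Projectivization F (Fin 2 → F) ≃ Option F :=
  ((OnePoint.equivProjectivization F).symm.trans (Equiv.cast rfl))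

lemma card_projLine (F : Type*) [Field F] [Fintype F] [DecidableEq F] :
    Nat.card (Projectivization F (Fin 2 → F)) = Fintype.card F + 1 := by
  rw [Nat.card_congr (projLineEquiv F)]
  simp [Nat.card_eq_fintype_card]

/-- scalar matrices as elements of GL(2,F) -/
def scalarGL {F : Type*} [Field F] (c : Fˣ) : GL (Fin 2) F where
  val := (c : F) • (1 : Matrix (Fin 2) (Fin 2) F)
  inv := ((c⁻¹ : Fˣ) : F) • (1 : Matrix (Fin 2) (Fin 2) F)
  val_inv := by rw [smul_mul_smul_comm, one_mul, ← Units.val_mul, mul_inv_cancel, Units.val_one, one_smul]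
  inv_val := by rw [smul_mul_smul_comm, one_mul, ← Units.val_mul, inv_mul_cancel, Units.val_one, one_smul]

lemma scalarGL_injective {F : Type*} [Field F] : Function.Injective (scalarGL (F := F)) := by
  intro c d h
  have := congrArg (fun m : GL (Fin 2) F => (m : Matrix (Fin 2) (Fin 2) F) 0 0) h
  simpa [scalarGL, Matrix.one_apply_eq, Units.ext_iff] using this

lemma scalarGL_mem_ker {F : Type*} [Field F] (c : Fˣ) :
    scalarGL c ∈ (projPerm F).ker := by
  rw [MonoidHom.mem_ker]
  ext p
  induction p using Projectivization.ind with
  | h v hv =>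
    simp only [projPerm_apply, Equiv.Perm.coe_one, id_eq]
    unfold projAct
    rw [Projectivization.map_mk, Projectivization.mk_eq_mk_iff']
    exact ⟨c, by
      simp [scalarGL, Matrix.toLin'_apply, Matrix.smul_mulVec, Matrix.one_mulVec]⟩

lemma card_range_projPerm (F : Type*) [Field F] [Fintype F] (q : ℕ)
    (hF : Fintype.card F = q) (hq : 2 ≤ q) :
    Nat.card (projPerm F).range ≤ (q + 1) * q * (q - 1) := by
  classical
  haveI : Finite (Projectivization F (Fin 2 → F)) :=
    Finite.of_equiv _ (projLineEquiv F).symm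
  have hGL : Nat.card (GL (Fin 2) F) = (q ^ 2 - 1) * (q ^ 2 - q) := by
    rw [Matrix.card_GL_field, Fin.prod_univ_two]
    simp [hF]
  have hker : q - 1 ≤ Nat.card (projPerm F).ker := by
    have hinj : Function.Injective
        (fun c : Fˣ => (⟨scalarGL c, scalarGL_mem_ker c⟩ : (projPerm F).ker)) := by
      intro c d h
      exact scalarGL_injective (congrArg Subtype.val h)
    calc q - 1 = Nat.card Fˣ := by
          rw [Nat.card_eq_fintype_card, Fintype.card_units, hF]
      _ ≤ Nat.card (projPerm F).ker := Nat.card_le_card_of_injective _ hinj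
  have hprod : Nat.card (projPerm F).range * Nat.card (projPerm F).ker
      = Nat.card (GL (Fin 2) F) := by
    rw [Subgroup.card_eq_card_quotient_mul_card_subgroup (projPerm F).ker,
      Nat.card_congr (QuotientGroup.quotientKerEquivRange (projPerm F)).toEquiv]
  have harith : (q ^ 2 - 1) * (q ^ 2 - q) = ((q + 1) * q * (q - 1)) * (q - 1) := by
    have h1 : q ^ 2 - 1 = (q + 1) * (q - 1) := by
      have := Nat.sq_sub_sq q 1
      simpa using this
    have h2 : q ^ 2 - q = (q - 1) * q := by
      rw [Nat.sub_mul, one_mul, ← pow_two]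
    rw [h1, h2]; ring
  have hpos : 0 < q - 1 := by omega
  have : Nat.card (projPerm F).range * (q - 1) ≤ ((q + 1) * q * (q - 1)) * (q - 1) := by
    calc Nat.card (projPerm F).range * (q - 1)
        ≤ Nat.card (projPerm F).range * Nat.card (projPerm F).ker :=
          Nat.mul_le_mul_left _ hker
      _ = (q ^ 2 - 1) * (q ^ 2 - q) := by rw [hprod, hGL]
      _ = ((q + 1) * q * (q - 1)) * (q - 1) := harith
  exact Nat.le_of_mul_le_mul_right this hpos

/-- If `u, v : ZMod k → ℙ(F²)` are starter vectors with respect to the action of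
`GL(2,F)` on the projective line over a field with `q` elements, then there exists a
covering array `4-CA(2·k·g·(g-1)·(g-2) + g, k, g)` with `g = q + 1`, i.e. of size
`2k(q+1)q(q-1) + q + 1` on `k` rows over the `g` symbols of the projective line. -/
theorem coveringArray_of_starter_vectors_PGL
    (q : ℕ) (hq : IsPrimePow q) (F : Type*) [Field F] [Fintype F]
    (hF : Fintype.card F = q) (k : ℕ) (hk : 4 ≤ k)
    (u v : ZMod k → Projectivization F (Fin 2 → F))
    (h : ∀ r : Fin 4 → ZMod k, Function.Injective r →
      ∀ w : Fin 4 → Projectivization F (Fin 2 → F), (∃ i j : Fin 4, w i ≠ w j) →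
        ∃ j : ZMod k,
          ∃ s ∈ ({u, v} : Set (ZMod k → Projectivization F (Fin 2 → F))),
            ∃ a : GL (Fin 2) F, ∀ i : Fin 4, s (r i - j) = projAct a (w i)) :
    ∃ A : Fin k → Fin (2 * k * (q + 1) * q * (q - 1) + (q + 1)) →
        Projectivization F (Fin 2 → F),
      IsCoveringArray4On (Projectivization F (Fin 2 → F))
        (2 * k * (q + 1) * q * (q - 1) + (q + 1)) k A := by
  classical
  haveI : Finite (Projectivization F (Fin 2 → F)) :=
    Finite.of_equiv _ (projLineEquiv F).symm
  haveI : NeZero k := ⟨by omega⟩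
  have hq2 : 2 ≤ q := hq.two_le
  have cardX : Nat.card (Projectivization F (Fin 2 → F)) = q + 1 := by
    rw [card_projLine, hF]
  haveI : Finite ((Bool × ZMod k × (projPerm F).range) ⊕ Projectivization F (Fin 2 → F)) :=
    inferInstance
  haveI : Nonempty (Projectivization F (Fin 2 → F)) :=
    ⟨Projectivization.mk F (fun _ => 1) (by
      intro h0; exact one_ne_zero (congrFun h0 0))⟩
  have hcardI : Nat.card ((Bool × ZMod k × (projPerm F).range) ⊕ Projectivization F (Fin 2 → F))
      ≤ 2 * k * (q + 1) * q * (q - 1) + (q + 1) := by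
    rw [Nat.card_sum, Nat.card_prod, Nat.card_prod, Nat.card_zmod, cardX]
    have h1 : Nat.card Bool = 2 := by simp [Nat.card_eq_fintype_card]
    have h2 := card_range_projPerm F q hF hq2
    rw [h1]
    have h3 : 2 * (k * Nat.card (projPerm F).range) ≤ 2 * k * (q + 1) * q * (q - 1) := by
      calc 2 * (k * Nat.card (projPerm F).range)
          ≤ 2 * (k * ((q + 1) * q * (q - 1))) :=
            Nat.mul_le_mul_left _ (Nat.mul_le_mul_left _ h2)
        _ = 2 * k * (q + 1) * q * (q - 1) := by ring
    omega
  haveI : Fintype ((Bool × ZMod k × (projPerm F).range) ⊕ Projectivization F (Fin 2 → F)) :=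
    Fintype.ofFinite _
  have hle : Fintype.card ((Bool × ZMod k × (projPerm F).range) ⊕ Projectivization F (Fin 2 → F))
      ≤ 2 * k * (q + 1) * q * (q - 1) + (q + 1) := by
    rw [← Nat.card_eq_fintype_card]; exact hcardI
  let C : ((Bool × ZMod k × (projPerm F).range) ⊕ Projectivization F (Fin 2 → F)) →
      Fin k → Projectivization F (Fin 2 → F) := fun o =>
    Sum.elim
      (fun t : Bool × ZMod k × (projPerm F).range => fun i : Fin k =>
        (t.2.2 : Equiv.Perm (Projectivization F (Fin 2 → F))).symm
          ((if t.1 then u else v) (((i : ℕ) : ZMod k) - t.2.1)))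
      (fun x => fun _ => x) o
  let e : ((Bool × ZMod k × (projPerm F).range) ⊕ Projectivization F (Fin 2 → F)) ↪
      Fin (2 * k * (q + 1) * q * (q - 1) + (q + 1)) :=
    (Fintype.equivFin _).toEmbedding.trans (Fin.castLEEmb hle)
  let g := Function.invFun e
  have hge : ∀ o, g (e o) = o := Function.leftInverse_invFun e.injective
  refine ⟨fun i c => C (g c) i, ?_⟩
  intro r hr w
  by_cases hw : ∃ i j, w i ≠ w j
  · have hρ : Function.Injective (fun i : Fin k => ((i : ℕ) : ZMod k)) := by
      intro i j hij
      have hvv : ((i : ℕ) : ZMod k).val = ((j : ℕ) : ZMod k).val := congrArg ZMod.val hij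
      rw [ZMod.val_cast_of_lt i.isLt, ZMod.val_cast_of_lt j.isLt] at hvv
      exact Fin.ext hvv
    obtain ⟨j, s, hs, a, ha⟩ := h (fun i => ((r i : ℕ) : ZMod k)) (hρ.comp hr) w hw
    simp only [Set.mem_insert_iff, Set.mem_singleton_iff] at hs
    have hmem : projPerm F a ∈ (projPerm F).range := ⟨a, rfl⟩
    rcases hs with hs | hs
    · refine ⟨e (Sum.inl (true, j, ⟨projPerm F a, hmem⟩)), fun i => ?_⟩
      show C (g (e _)) (r i) = w i
      rw [hge]
      show (projPerm F a).symm ((if true then u else v) (((r i : ℕ) : ZMod k) - j)) = w i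
      rw [if_pos rfl, ← hs, ha i]
      exact (projPerm F a).symm_apply_apply (w i)
    · refine ⟨e (Sum.inl (false, j, ⟨projPerm F a, hmem⟩)), fun i => ?_⟩
      show C (g (e _)) (r i) = w i
      rw [hge]
      show (projPerm F a).symm ((if false then u else v) (((r i : ℕ) : ZMod k) - j)) = w i
      rw [if_neg (by simp), ← hs, ha i]
      exact (projPerm F a).symm_apply_apply (w i)
  · push_neg at hw
    refine ⟨e (Sum.inr (w 0)), fun i => ?_⟩
    show C (g (e _)) (r i) = w i
    rw [hge]
    exact hw 0 i
end

section
/- Let q be a prime power and F a finite field with |F| = q. The diagonal action of GL(2,F) on 4-tuples of points of the projective line, i.e. on (ℙ(F²))⁴ via (a • w) i = a • (w i), has exactly q + 12 orbits. -/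
/-- The orbit of a 4-tuple of points of the projective line `ℙ(F²)` under the diagonal
action of `GL(2,F)`. -/
noncomputable def projTupleOrbit {F : Type*} [Field F]
    (w : Fin 4 → Projectivization F (Fin 2 → F)) :
    Set (Fin 4 → Projectivization F (Fin 2 → F)) :=
  { w' | ∃ a : GL (Fin 2) F, ∀ i : Fin 4, projAct a (w i) = w' i }

namespace ProjCount

open Projectivization Matrix

variable {F : Type*} [Field F]

abbrev PL (F : Type*) [Field F] := Projectivization F (Fin 2 → F)

lemma mulVec_ne_zero (a : GL (Fin 2) F) {v : Fin 2 → F} (hv : v ≠ 0) :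
    (a : Matrix (Fin 2) (Fin 2) F).mulVec v ≠ 0 := by
  intro h
  apply hv
  have : ((a⁻¹ : GL (Fin 2) F) : Matrix (Fin 2) (Fin 2) F).mulVec
      ((a : Matrix (Fin 2) (Fin 2) F).mulVec v) = v := by
    rw [Matrix.mulVec_mulVec, a.inv_mul, Matrix.one_mulVec]
  rw [h, Matrix.mulVec_zero] at this
  exact this.symm

lemma mk_congr {v w : Fin 2 → F} (hv : v ≠ 0) (hw : w ≠ 0) (h : v = w) :
    Projectivization.mk F v hv = Projectivization.mk F w hw := by subst h; rfl

lemma projAct_mk (a : GL (Fin 2) F) (v : Fin 2 → F) (hv : v ≠ 0) :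
    projAct a (Projectivization.mk F v hv) =
      Projectivization.mk F ((a : Matrix (Fin 2) (Fin 2) F).mulVec v)
        (mulVec_ne_zero a hv) := by
  unfold projAct
  rw [Projectivization.map_mk]
  exact mk_congr _ _ (Matrix.toLin'_apply _ _)

lemma projAct_one (p : PL F) : projAct 1 p = p := by
  induction p using Projectivization.ind with
  | h v hv => rw [projAct_mk]; exact mk_congr _ _ (by simp)

lemma projAct_mul (a b : GL (Fin 2) F) (p : PL F) :
    projAct a (projAct b p) = projAct (a * b) p := by
  induction p using Projectivization.ind with
  | h v hv =>
    rw [projAct_mk, projAct_mk, projAct_mk]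
    exact mk_congr _ _ (by rw [Matrix.mulVec_mulVec]; rfl)

lemma projAct_inv_act (a : GL (Fin 2) F) (p : PL F) : projAct a⁻¹ (projAct a p) = p := by
  rw [projAct_mul, inv_mul_cancel, projAct_one]

lemma projAct_act_inv (a : GL (Fin 2) F) (p : PL F) : projAct a (projAct a⁻¹ p) = p := by
  rw [projAct_mul, mul_inv_cancel, projAct_one]

lemma projAct_injective (a : GL (Fin 2) F) : Function.Injective (projAct a) := by
  intro p q h
  have := congrArg (projAct a⁻¹) h
  rwa [projAct_inv_act, projAct_inv_act] at this

lemma vinf_ne : (![1, 0] : Fin 2 → F) ≠ 0 := by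
  intro h; have := congrFun h 0; simp at this

lemma vpt_ne (x : F) : (![x, 1] : Fin 2 → F) ≠ 0 := by
  intro h; have := congrFun h 1; simp at this

noncomputable def Pinf : PL F := Projectivization.mk F ![1, 0] vinf_ne

noncomputable def Pt (x : F) : PL F := Projectivization.mk F ![x, 1] (vpt_ne x)

lemma Pinf_ne_Pt (x : F) : (Pinf : PL F) ≠ Pt x := by
  unfold Pinf Pt
  intro h
  rw [Projectivization.mk_eq_mk_iff'] at h
  obtain ⟨a, ha⟩ := h
  have h1 := congrFun ha 1
  have h0 := congrFun ha 0
  simp at h1 h0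
  subst h1; simp at h0

lemma Pt_inj {x y : F} (h : (Pt x : PL F) = Pt y) : x = y := by
  unfold Pt at h
  rw [Projectivization.mk_eq_mk_iff'] at h
  obtain ⟨a, ha⟩ := h
  have h1 := congrFun ha 1
  have h0 := congrFun ha 0
  simp at h1 h0
  subst h1; simpa using h0.symm

lemma pt_or_inf (p : PL F) : p = Pinf ∨ ∃ x, p = Pt x := by
  induction p using Projectivization.ind with
  | h v hv =>
    by_cases h1 : v 1 = 0
    · left
      unfold Pinf
      rw [Projectivization.mk_eq_mk_iff']
      refine ⟨v 0, ?_⟩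
      funext i; fin_cases i <;> simp [h1]
    · right
      refine ⟨v 0 / v 1, ?_⟩
      unfold Pt
      rw [Projectivization.mk_eq_mk_iff']
      refine ⟨v 1, ?_⟩
      funext i; fin_cases i <;> simp [h1] <;> field_simp

lemma det2_ne_zero {u v : Fin 2 → F} (hu : u ≠ 0) (hv : v ≠ 0)
    (h : Projectivization.mk F u hu ≠ Projectivization.mk F v hv) :
    u 0 * v 1 - u 1 * v 0 ≠ 0 := by
  intro hD
  apply h
  rw [Projectivization.mk_eq_mk_iff']
  rw [sub_eq_zero] at hD
  by_cases hv0 : v 0 = 0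
  · have hv1 : v 1 ≠ 0 := by
      intro hv1; exact hv ((by funext i; fin_cases i <;> simp [hv0, hv1]))
    refine ⟨u 1 / v 1, ?_⟩
    have hu0 : u 0 = 0 := by
      have : u 0 * v 1 = 0 := by rw [hD, hv0]; ring
      exact (mul_eq_zero.1 this).resolve_right hv1
    funext i; fin_cases i <;> simp [hv0, hu0] <;> field_simp
  · refine ⟨u 0 / v 0, ?_⟩
    funext i; fin_cases i
    · simp; field_simp
    · simp
      field_simp
      linear_combination hD

/-- The matrix with columns `s`, `t`. -/
def colMat (s t : Fin 2 → F) : Matrix (Fin 2) (Fin 2) F := Matrix.of ![![s 0, t 0], ![s 1, t 1]]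

lemma colMat_det (s t : Fin 2 → F) : (colMat s t).det = s 0 * t 1 - s 1 * t 0 := by
  simp [colMat, Matrix.det_fin_two]; ring

lemma colMat_mulVec_e0 (s t : Fin 2 → F) : (colMat s t).mulVec ![1, 0] = s := by
  funext i; fin_cases i <;> simp [colMat, Matrix.mulVec, dotProduct, Fin.sum_univ_two]

lemma colMat_mulVec_e1 (s t : Fin 2 → F) : (colMat s t).mulVec ![0, 1] = t := by
  funext i; fin_cases i <;> simp [colMat, Matrix.mulVec, dotProduct, Fin.sum_univ_two]

lemma colMat_mulVec_e01 (s t : Fin 2 → F) : (colMat s t).mulVec ![1, 1] = s + t := by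
  funext i; fin_cases i <;> simp [colMat, Matrix.mulVec, dotProduct, Fin.sum_univ_two]

lemma coe_mkOfDetNeZero (A : Matrix (Fin 2) (Fin 2) F) (h : A.det ≠ 0) :
    ((Matrix.GeneralLinearGroup.mkOfDetNeZero A h : GL (Fin 2) F) :
      Matrix (Fin 2) (Fin 2) F) = A := rfl

lemma trans2 (p0 p1 : PL F) (h : p0 ≠ p1) :
    ∃ a : GL (Fin 2) F, projAct a Pinf = p0 ∧ projAct a (Pt 0) = p1 := by
  have hu : p0.rep ≠ 0 := p0.rep_nonzero
  have hv : p1.rep ≠ 0 := p1.rep_nonzero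
  have hmk : Projectivization.mk F p0.rep hu ≠ Projectivization.mk F p1.rep hv := by
    rw [Projectivization.mk_rep, Projectivization.mk_rep]; exact h
  have hD := det2_ne_zero hu hv hmk
  have hdet : (colMat p0.rep p1.rep).det ≠ 0 := by rw [colMat_det]; exact hD
  refine ⟨Matrix.GeneralLinearGroup.mkOfDetNeZero _ hdet, ?_, ?_⟩
  · unfold Pinf
    rw [projAct_mk]
    exact (mk_congr _ hu (by rw [coe_mkOfDetNeZero, colMat_mulVec_e0])).trans
      (Projectivization.mk_rep p0)
  · unfold Pt
    rw [projAct_mk]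
    exact (mk_congr _ hv (by rw [coe_mkOfDetNeZero]; simpa using colMat_mulVec_e1 p0.rep p1.rep)).trans
      (Projectivization.mk_rep p1)

lemma mk_smul_eq (v : Fin 2 → F) (hv : v ≠ 0) {c : F} (hc : c ≠ 0) :
    Projectivization.mk F (c • v) (smul_ne_zero hc hv) = Projectivization.mk F v hv := by
  rw [Projectivization.mk_eq_mk_iff']; exact ⟨c, rfl⟩

lemma trans3 (p0 p1 p2 : PL F) (h01 : p0 ≠ p1) (h02 : p0 ≠ p2) (h12 : p1 ≠ p2) :
    ∃ a : GL (Fin 2) F,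
      projAct a Pinf = p0 ∧ projAct a (Pt 0) = p1 ∧ projAct a (Pt 1) = p2 := by
  have hu : p0.rep ≠ 0 := p0.rep_nonzero
  have hv : p1.rep ≠ 0 := p1.rep_nonzero
  have hr : p2.rep ≠ 0 := p2.rep_nonzero
  set u := p0.rep
  set v := p1.rep
  set r := p2.rep
  have hmk01 : Projectivization.mk F u hu ≠ Projectivization.mk F v hv := by
    rw [Projectivization.mk_rep, Projectivization.mk_rep]; exact h01
  have hmk02 : Projectivization.mk F u hu ≠ Projectivization.mk F r hr := by
    rw [Projectivization.mk_rep, Projectivization.mk_rep]; exact h02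
  have hmk21 : Projectivization.mk F r hr ≠ Projectivization.mk F v hv := by
    rw [Projectivization.mk_rep, Projectivization.mk_rep]; exact fun hh => h12 hh.symm
  have hD : u 0 * v 1 - u 1 * v 0 ≠ 0 := det2_ne_zero hu hv hmk01
  have hNα : r 0 * v 1 - r 1 * v 0 ≠ 0 := det2_ne_zero hr hv hmk21
  have hNβ : u 0 * r 1 - u 1 * r 0 ≠ 0 := by
    have := det2_ne_zero hu hr hmk02
    exact this
  set α := (r 0 * v 1 - r 1 * v 0) / (u 0 * v 1 - u 1 * v 0) with hα_def
  set β := (u 0 * r 1 - u 1 * r 0) / (u 0 * v 1 - u 1 * v 0) with hβ_def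
  have hα : α ≠ 0 := div_ne_zero hNα hD
  have hβ : β ≠ 0 := div_ne_zero hNβ hD
  have hdet : (colMat (α • u) (β • v)).det ≠ 0 := by
    rw [colMat_det]
    have : (α • u) 0 * (β • v) 1 - (α • u) 1 * (β • v) 0
        = α * β * (u 0 * v 1 - u 1 * v 0) := by
      simp [Pi.smul_apply, smul_eq_mul]; ring
    rw [this]
    exact mul_ne_zero (mul_ne_zero hα hβ) hD
  refine ⟨Matrix.GeneralLinearGroup.mkOfDetNeZero _ hdet, ?_, ?_, ?_⟩
  · unfold Pinf
    rw [projAct_mk]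
    refine Eq.trans ?_ ((mk_smul_eq u hu hα).trans (Projectivization.mk_rep p0))
    exact mk_congr _ _ (by rw [coe_mkOfDetNeZero, colMat_mulVec_e0])
  · unfold Pt
    rw [projAct_mk]
    refine Eq.trans ?_ ((mk_smul_eq v hv hβ).trans (Projectivization.mk_rep p1))
    exact mk_congr _ _ (by rw [coe_mkOfDetNeZero]; simpa using colMat_mulVec_e1 (α • u) (β • v))
  · unfold Pt
    rw [projAct_mk]
    refine Eq.trans ?_ (Projectivization.mk_rep p2)
    refine mk_congr _ _ ?_
    rw [coe_mkOfDetNeZero]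
    have h11 : (colMat (α • u) (β • v)).mulVec ![(1 : F), 1] = α • u + β • v := by
      simpa using colMat_mulVec_e01 (α • u) (β • v)
    rw [h11]
    funext i
    have : α * u i + β * v i = r i := by
      fin_cases i <;>
      · simp only [Fin.zero_eta, Fin.mk_one]
        rw [hα_def, hβ_def]
        rw [div_mul_eq_mul_div, div_mul_eq_mul_div, ← add_div, div_eq_iff hD]
        ring
    simpa [Pi.smul_apply, smul_eq_mul] using this

lemma trans1 (p0 : PL F) : ∃ a : GL (Fin 2) F, projAct a Pinf = p0 := by
  by_cases h : p0 = Pinf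
  · exact ⟨1, by rw [projAct_one, h]⟩
  · obtain ⟨a, ha, -⟩ := trans2 p0 Pinf h
    exact ⟨a, ha⟩

lemma stab (a : GL (Fin 2) F) (h0 : projAct a Pinf = Pinf)
    (h1 : projAct a (Pt 0) = Pt 0) (h2 : projAct a (Pt 1) = Pt 1) (p : PL F) :
    projAct a p = p := by
  unfold Pinf at h0
  unfold Pt at h1 h2
  rw [projAct_mk] at h0 h1 h2
  rw [Projectivization.mk_eq_mk_iff'] at h0 h1 h2
  obtain ⟨c, hc⟩ := h0
  obtain ⟨d, hd⟩ := h1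
  obtain ⟨e, he⟩ := h2
  have hc0 := congrFun hc 0; have hc1 := congrFun hc 1
  have hd0 := congrFun hd 0; have hd1 := congrFun hd 1
  have he0 := congrFun he 0; have he1 := congrFun he 1
  simp [Matrix.mulVec, dotProduct, Fin.sum_univ_two] at hc0 hc1 hd0 hd1 he0 he1
  induction p using Projectivization.ind with
  | h v hv =>
    rw [projAct_mk]
    rw [Projectivization.mk_eq_mk_iff']
    have hcd : c = d := by
      have h := he0.symm.trans he1
      rw [← hc0, ← hd0, ← hc1, ← hd1] at h
      simpa using h
    refine ⟨c, ?_⟩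
    funext i
    fin_cases i <;>
      simp only [Fin.zero_eta, Fin.mk_one, Pi.smul_apply, smul_eq_mul, Matrix.mulVec,
        dotProduct, Fin.sum_univ_two]
    · rw [← hc0, ← hd0]; ring
    · rw [← hc1, ← hd1, ← hcd]; ring

noncomputable def V3 : Fin 3 → PL F := ![Pinf, Pt 0, Pt 1]

lemma V3_injective : Function.Injective (V3 : Fin 3 → PL F) := by
  have h01 : (Pinf : PL F) ≠ Pt 0 := Pinf_ne_Pt 0
  have h02 : (Pinf : PL F) ≠ Pt 1 := Pinf_ne_Pt 1
  have h12 : (Pt 0 : PL F) ≠ Pt 1 := fun h => zero_ne_one (Pt_inj h)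
  intro i j h
  fin_cases i <;> fin_cases j <;>
    simp_all [V3] <;>
    first
      | rfl
      | exact absurd h h01 | exact absurd h.symm h01
      | exact absurd h h02 | exact absurd h.symm h02
      | exact absurd h h12 | exact absurd h.symm h12

def S14 : Finset (Fin 4 → Fin 3) :=
  {![0,0,0,0], ![0,0,0,1], ![0,0,1,0], ![0,0,1,1], ![0,0,1,2],
   ![0,1,0,0], ![0,1,0,1], ![0,1,0,2], ![0,1,1,0], ![0,1,1,1],
   ![0,1,1,2], ![0,1,2,0], ![0,1,2,1], ![0,1,2,2]}

lemma S14_card : S14.card = 14 := by decide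

lemma S14_pattern_unique : ∀ p ∈ S14, ∀ p' ∈ S14,
    (∀ i j, p i = p j ↔ p' i = p' j) → p = p' := by decide

lemma S14_repeat : ∀ p ∈ S14, ∃ i j, i ≠ j ∧ p i = p j := by decide

noncomputable def canon3 (p : Fin 4 → Fin 3) : Fin 4 → PL F := fun i => V3 (p i)

noncomputable def canon4 (x : F) : Fin 4 → PL F := ![Pinf, Pt 0, Pt 1, Pt x]

lemma canon3_injective : Function.Injective (canon3 : (Fin 4 → Fin 3) → Fin 4 → PL F) := by
  intro p p' h
  funext i
  exact V3_injective (congrFun h i)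

lemma canon4_injective : Function.Injective (canon4 : F → Fin 4 → PL F) := by
  intro x y h
  have := congrFun h 3
  simp only [canon4] at this
  exact Pt_inj (by simpa using this)

lemma canon4_tuple_inj {x : F} (hx0 : x ≠ 0) (hx1 : x ≠ 1) :
    Function.Injective (canon4 x : Fin 4 → PL F) := by
  have h01 : (Pinf : PL F) ≠ Pt 0 := Pinf_ne_Pt 0
  have h02 : (Pinf : PL F) ≠ Pt 1 := Pinf_ne_Pt 1
  have h03 : (Pinf : PL F) ≠ Pt x := Pinf_ne_Pt x
  have h12 : (Pt 0 : PL F) ≠ Pt 1 := fun h => zero_ne_one (Pt_inj h)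
  have h13 : (Pt 0 : PL F) ≠ Pt x := fun h => hx0 (Pt_inj h).symm
  have h23 : (Pt 1 : PL F) ≠ Pt x := fun h => hx1 (Pt_inj h).symm
  intro i j h
  fin_cases i <;> fin_cases j <;>
    simp_all [canon4] <;>
    first
      | rfl
      | exact absurd h h01 | exact absurd h.symm h01
      | exact absurd h h02 | exact absurd h.symm h02
      | exact absurd h h03 | exact absurd h.symm h03
      | exact absurd h h12 | exact absurd h.symm h12
      | exact absurd h h13 | exact absurd h.symm h13
      | exact absurd h h23 | exact absurd h.symm h23

/-- The set of canonical tuples. -/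
def C : Set (Fin 4 → PL F) :=
  canon3 '' ↑S14 ∪ canon4 '' {x : F | x ≠ 0 ∧ x ≠ 1}

lemma orbit_eq {c w : Fin 4 → PL F} (h : ∃ a : GL (Fin 2) F, ∀ i, projAct a (c i) = w i) :
    projTupleOrbit c = projTupleOrbit w := by
  obtain ⟨a, ha⟩ := h
  ext w'
  constructor
  · rintro ⟨b, hb⟩
    refine ⟨b * a⁻¹, fun i => ?_⟩
    have hinv : projAct a⁻¹ (w i) = c i := by rw [← ha i, projAct_inv_act]
    rw [← projAct_mul, hinv, hb i]
  · rintro ⟨b, hb⟩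
    refine ⟨b * a, fun i => ?_⟩
    rw [← projAct_mul, ha i, hb i]

lemma self_mem_orbit (w : Fin 4 → PL F) : w ∈ projTupleOrbit w :=
  ⟨1, fun _ => projAct_one _⟩

lemma memC3 {p : Fin 4 → Fin 3} (hp : p ∈ S14) : (canon3 p : Fin 4 → PL F) ∈ C :=
  Or.inl ⟨p, hp, rfl⟩

lemma exists_canonical (w : Fin 4 → PL F) :
    ∃ c ∈ C, ∃ a : GL (Fin 2) F, ∀ i, projAct a (c i) = w i := by
  by_cases h1 : w 1 = w 0
  · by_cases h2 : w 2 = w 0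
    · by_cases h3 : w 3 = w 0
      · -- pattern 0000
        obtain ⟨a, ha⟩ := trans1 (w 0)
        refine ⟨canon3 ![0,0,0,0], memC3 (by decide), a, fun i => ?_⟩
        fin_cases i <;> simp [canon3, V3, ha, h1, h2, h3]
      · -- pattern 0001
        obtain ⟨a, ha0, ha1⟩ := trans2 (w 0) (w 3) (fun hh => h3 hh.symm)
        refine ⟨canon3 ![0,0,0,1], memC3 (by decide), a, fun i => ?_⟩
        fin_cases i <;> simp [canon3, V3, ha0, ha1, h1, h2]
    · by_cases h3 : w 3 = w 0
      · -- pattern 0010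
        obtain ⟨a, ha0, ha1⟩ := trans2 (w 0) (w 2) (fun hh => h2 hh.symm)
        refine ⟨canon3 ![0,0,1,0], memC3 (by decide), a, fun i => ?_⟩
        fin_cases i <;> simp [canon3, V3, ha0, ha1, h1, h3]
      · by_cases h3' : w 3 = w 2
        · -- pattern 0011
          obtain ⟨a, ha0, ha1⟩ := trans2 (w 0) (w 2) (fun hh => h2 hh.symm)
          refine ⟨canon3 ![0,0,1,1], memC3 (by decide), a, fun i => ?_⟩
          fin_cases i <;> simp [canon3, V3, ha0, ha1, h1, h3']
        · -- pattern 0012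
          obtain ⟨a, ha0, ha1, ha2⟩ := trans3 (w 0) (w 2) (w 3)
            (fun hh => h2 hh.symm) (fun hh => h3 hh.symm) (fun hh => h3' hh.symm)
          refine ⟨canon3 ![0,0,1,2], memC3 (by decide), a, fun i => ?_⟩
          fin_cases i <;> simp [canon3, V3, ha0, ha1, ha2, h1]
  · by_cases h2 : w 2 = w 0
    · by_cases h3 : w 3 = w 0
      · -- pattern 0100
        obtain ⟨a, ha0, ha1⟩ := trans2 (w 0) (w 1) (fun hh => h1 hh.symm)
        refine ⟨canon3 ![0,1,0,0], memC3 (by decide), a, fun i => ?_⟩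
        fin_cases i <;> simp [canon3, V3, ha0, ha1, h2, h3]
      · by_cases h3' : w 3 = w 1
        · -- pattern 0101
          obtain ⟨a, ha0, ha1⟩ := trans2 (w 0) (w 1) (fun hh => h1 hh.symm)
          refine ⟨canon3 ![0,1,0,1], memC3 (by decide), a, fun i => ?_⟩
          fin_cases i <;> simp [canon3, V3, ha0, ha1, h2, h3']
        · -- pattern 0102
          obtain ⟨a, ha0, ha1, ha2⟩ := trans3 (w 0) (w 1) (w 3)
            (fun hh => h1 hh.symm) (fun hh => h3 hh.symm) (fun hh => h3' hh.symm)
          refine ⟨canon3 ![0,1,0,2], memC3 (by decide), a, fun i => ?_⟩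
          fin_cases i <;> simp [canon3, V3, ha0, ha1, ha2, h2]
    · by_cases h2' : w 2 = w 1
      · by_cases h3 : w 3 = w 0
        · -- pattern 0110
          obtain ⟨a, ha0, ha1⟩ := trans2 (w 0) (w 1) (fun hh => h1 hh.symm)
          refine ⟨canon3 ![0,1,1,0], memC3 (by decide), a, fun i => ?_⟩
          fin_cases i <;> simp [canon3, V3, ha0, ha1, h2', h3]
        · by_cases h3' : w 3 = w 1
          · -- pattern 0111
            obtain ⟨a, ha0, ha1⟩ := trans2 (w 0) (w 1) (fun hh => h1 hh.symm)
            refine ⟨canon3 ![0,1,1,1], memC3 (by decide), a, fun i => ?_⟩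
            fin_cases i <;> simp [canon3, V3, ha0, ha1, h2', h3']
          · -- pattern 0112
            obtain ⟨a, ha0, ha1, ha2⟩ := trans3 (w 0) (w 1) (w 3)
              (fun hh => h1 hh.symm) (fun hh => h3 hh.symm) (fun hh => h3' hh.symm)
            refine ⟨canon3 ![0,1,1,2], memC3 (by decide), a, fun i => ?_⟩
            fin_cases i <;> simp [canon3, V3, ha0, ha1, ha2, h2']
      · by_cases h3 : w 3 = w 0
        · -- pattern 0120
          obtain ⟨a, ha0, ha1, ha2⟩ := trans3 (w 0) (w 1) (w 2)
            (fun hh => h1 hh.symm) (fun hh => h2 hh.symm) (fun hh => h2' hh.symm)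
          refine ⟨canon3 ![0,1,2,0], memC3 (by decide), a, fun i => ?_⟩
          fin_cases i <;> simp [canon3, V3, ha0, ha1, ha2, h3]
        · by_cases h3a : w 3 = w 1
          · -- pattern 0121
            obtain ⟨a, ha0, ha1, ha2⟩ := trans3 (w 0) (w 1) (w 2)
              (fun hh => h1 hh.symm) (fun hh => h2 hh.symm) (fun hh => h2' hh.symm)
            refine ⟨canon3 ![0,1,2,1], memC3 (by decide), a, fun i => ?_⟩
            fin_cases i <;> simp [canon3, V3, ha0, ha1, ha2, h3a]
          · by_cases h3b : w 3 = w 2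
            · -- pattern 0122
              obtain ⟨a, ha0, ha1, ha2⟩ := trans3 (w 0) (w 1) (w 2)
                (fun hh => h1 hh.symm) (fun hh => h2 hh.symm) (fun hh => h2' hh.symm)
              refine ⟨canon3 ![0,1,2,2], memC3 (by decide), a, fun i => ?_⟩
              fin_cases i <;> simp [canon3, V3, ha0, ha1, ha2, h3b]
            · -- pattern 0123
              obtain ⟨a, ha0, ha1, ha2⟩ := trans3 (w 0) (w 1) (w 2)
                (fun hh => h1 hh.symm) (fun hh => h2 hh.symm) (fun hh => h2' hh.symm)
              set r : PL F := projAct a⁻¹ (w 3) with hr_def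
              have hr : projAct a r = w 3 := projAct_act_inv a (w 3)
              have hrinf : r ≠ Pinf := by
                intro hh
                apply h3
                rw [← hr, hh, ha0]
              obtain ⟨x, hx⟩ := (pt_or_inf r).resolve_left hrinf
              have hx0 : x ≠ 0 := by
                intro hh
                apply h3a
                rw [← hr, hx, hh, ha1]
              have hx1 : x ≠ 1 := by
                intro hh
                apply h3b
                rw [← hr, hx, hh, ha2]
              refine ⟨canon4 x, Or.inr ⟨x, ⟨hx0, hx1⟩, rfl⟩, a, fun i => ?_⟩
              have ha3 : projAct a (Pt x) = w 3 := by rw [← hx, hr]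
              fin_cases i <;> simp [canon4, ha0, ha1, ha2, ha3]

lemma canon3_eq_iff (p : Fin 4 → Fin 3) (i j : Fin 4) :
    (canon3 p : Fin 4 → PL F) i = canon3 p j ↔ p i = p j := by
  constructor
  · exact fun h => V3_injective h
  · intro h; simp [canon3, h]

lemma canonical_unique {c c' : Fin 4 → PL F} (hc : c ∈ C) (hc' : c' ∈ C)
    (h : ∃ a : GL (Fin 2) F, ∀ i, projAct a (c i) = c' i) : c = c' := by
  obtain ⟨a, ha⟩ := h
  have hpat : ∀ i j, c i = c j ↔ c' i = c' j := by
    intro i j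
    constructor
    · intro hh; rw [← ha i, ← ha j, hh]
    · intro hh
      apply projAct_injective a
      rw [ha i, ha j, hh]
  rcases hc with ⟨p, hp, rfl⟩ | ⟨x, hx, rfl⟩ <;>
    rcases hc' with ⟨p', hp', rfl⟩ | ⟨x', hx', rfl⟩
  · -- both canon3
    have : p = p' := by
      refine S14_pattern_unique p hp p' hp' (fun i j => ?_)
      rw [← canon3_eq_iff (F := F) p i j, ← canon3_eq_iff (F := F) p' i j]
      exact hpat i j
    rw [this]
  · -- canon3 / canon4 : impossible
    exfalso
    obtain ⟨i, j, hij, hpij⟩ := S14_repeat p hp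
    have : (canon4 x' : Fin 4 → PL F) i = canon4 x' j :=
      (hpat i j).1 ((canon3_eq_iff (F := F) p i j).2 hpij)
    exact hij (canon4_tuple_inj hx'.1 hx'.2 this)
  · -- canon4 / canon3 : impossible
    exfalso
    obtain ⟨i, j, hij, hpij⟩ := S14_repeat p' hp'
    have : (canon4 x : Fin 4 → PL F) i = canon4 x j :=
      (hpat i j).2 ((canon3_eq_iff (F := F) p' i j).2 hpij)
    exact hij (canon4_tuple_inj hx.1 hx.2 this)
  · -- both canon4
    have h0 : projAct a Pinf = Pinf := by simpa [canon4] using ha 0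
    have h1 : projAct a (Pt 0) = Pt 0 := by simpa [canon4] using ha 1
    have h2 : projAct a (Pt 1) = Pt 1 := by simpa [canon4] using ha 2
    have h3 : projAct a (Pt x) = Pt x' := by simpa [canon4] using ha 3
    have : Pt x = Pt x' := by rw [← h3, stab a h0 h1 h2]
    rw [Pt_inj this]

lemma ncard_C [Fintype F] : (C : Set (Fin 4 → PL F)).ncard = 14 + (Fintype.card F - 2) := by
  classical
  have hA : {x : F | x ≠ 0 ∧ x ≠ 1} = ↑(({0, 1} : Finset F)ᶜ) := by
    ext x; simp [not_or, and_comm]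
  have hdisj : Disjoint (canon3 '' ↑S14) (canon4 '' {x : F | x ≠ 0 ∧ x ≠ 1}) := by
    rw [Set.disjoint_left]
    rintro _ ⟨p, hp, rfl⟩ ⟨x, hx, heq⟩
    obtain ⟨i, j, hij, hpij⟩ := S14_repeat p hp
    have : (canon4 x : Fin 4 → PL F) i = canon4 x j := by
      rw [heq]; exact (canon3_eq_iff p i j).2 hpij
    exact hij (canon4_tuple_inj hx.1 hx.2 this)
  have hf1 : (canon3 '' (↑S14 : Set (Fin 4 → Fin 3)) : Set (Fin 4 → PL F)).Finite :=
    Set.Finite.image _ (S14.finite_toSet)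
  have hf2 : (canon4 '' {x : F | x ≠ 0 ∧ x ≠ 1} : Set (Fin 4 → PL F)).Finite := by
    rw [hA]; exact Set.Finite.image _ (Finset.finite_toSet _)
  rw [C, Set.ncard_union_eq hdisj hf1 hf2]
  congr 1
  · rw [Set.ncard_image_of_injective _ canon3_injective, Set.ncard_coe_finset, S14_card]
  · rw [Set.ncard_image_of_injective _ canon4_injective, hA, Set.ncard_coe_finset,
      Finset.card_compl, Finset.card_pair (zero_ne_one)]

end ProjCount

/-- The diagonal action of `GL(2,F)` on 4-tuples of points of the projective line over a
field with `q` elements has exactly `q + 12` orbits. -/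
theorem card_projTupleOrbits (q : ℕ) (hq : IsPrimePow q) (F : Type*) [Field F] [Fintype F]
    (hF : Fintype.card F = q) :
    { O : Set (Fin 4 → Projectivization F (Fin 2 → F)) |
        ∃ w : Fin 4 → Projectivization F (Fin 2 → F), O = projTupleOrbit w }.ncard
      = q + 12 := by
  classical
  have hset : { O : Set (Fin 4 → Projectivization F (Fin 2 → F)) |
      ∃ w : Fin 4 → Projectivization F (Fin 2 → F), O = projTupleOrbit w }
      = projTupleOrbit '' (ProjCount.C) := by
    ext O
    simp only [Set.mem_setOf_eq, Set.mem_image]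
    constructor
    · rintro ⟨w, rfl⟩
      obtain ⟨c, hcC, a, ha⟩ := ProjCount.exists_canonical w
      exact ⟨c, hcC, ProjCount.orbit_eq ⟨a, ha⟩⟩
    · rintro ⟨c, hc, rfl⟩
      exact ⟨c, rfl⟩
  have hinj : Set.InjOn projTupleOrbit (ProjCount.C (F := F)) := by
    intro c hc c' hc' he
    refine ProjCount.canonical_unique hc hc' ?_
    have h := ProjCount.self_mem_orbit c'
    rw [← he] at h
    exact h
  rw [hset, Set.ncard_image_of_injOn hinj, ProjCount.ncard_C, hF]
  have h2 := hq.two_le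
  omega
end
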